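/- arXiv:2111.14492 — 9 statements merged into one kernel-verified Lean document; each statement's English description precedes it below -/
import Mathlib

section
/- For every natural number n ≥ 1, the n×n Hankel determinant det( C(i+j, ⌊(i+j)/2⌋) )_{i,j=0}^{n-1} of the middle binomial coefficients equals 1. -/
/-- `g i k = C(i, ⌊(i-k)/2⌋)` for `k ≤ i`, else `0`. -/
def hg (i k : ℕ) : ℕ := if k ≤ i then Nat.choose i ((i - k) / 2) else 0

lemma hg_zero {i k : ℕ} (h : i < k) : hg i k = 0 := by
  simp [hg, Nat.not_le.mpr h]

lemma hg_diag (i : ℕ) : hg i i = 1 := by simp [hg]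

lemma hg_rec0 (i : ℕ) : hg (i + 1) 0 = hg i 0 + hg i 1 := by
  rcases Nat.eq_zero_or_pos i with rfl | hi
  · simp [hg]
  rcases Nat.even_or_odd i with ⟨m, hm⟩ | ⟨m, hm⟩
  · -- i = 2m, m ≥ 1
    subst hm
    have hm1 : 1 ≤ m := by omega
    obtain ⟨m', rfl⟩ := Nat.exists_eq_add_of_le hm1
    simp only [hg, Nat.zero_le, if_pos, Nat.le_add_left]
    rw [if_pos (by omega)]
    have h1 : (1 + m' + (1 + m') + 1 - 0) / 2 = m' + 1 := by omega
    have h2 : (1 + m' + (1 + m') - 0) / 2 = m' + 1 := by omega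
    have h3 : (1 + m' + (1 + m') - 1) / 2 = m' := by omega
    rw [h1, h2, h3, Nat.choose_succ_succ', Nat.add_comm]
  · -- i = 2m+1
    subst hm
    simp only [hg, Nat.zero_le, if_pos]
    rw [if_pos (by omega)]
    have h1 : (2 * m + 1 + 1 - 0) / 2 = m + 1 := by omega
    have h2 : (2 * m + 1 - 0) / 2 = m := by omega
    have h3 : (2 * m + 1 - 1) / 2 = m := by omega
    rw [h1, h2, h3, Nat.choose_succ_succ']
    congr 1
    rw [← Nat.choose_symm (by omega : m + 1 ≤ 2 * m + 1)]
    congr 1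
    omega

lemma hg_recS (i k : ℕ) : hg (i + 1) (k + 1) = hg i k + hg i (k + 2) := by
  by_cases hk : k ≤ i
  swap
  · rw [hg_zero (by omega), hg_zero (by omega), hg_zero (by omega)]
  by_cases hk2 : k + 2 ≤ i
  · -- main case
    simp only [hg, if_pos (by omega : k + 1 ≤ i + 1), if_pos hk, if_pos hk2]
    have h0 : 2 ≤ i - k := by omega
    have h1 : (i + 1 - (k + 1)) / 2 = (i - k - 2) / 2 + 1 := by omega
    have h2 : (i - k) / 2 = (i - k - 2) / 2 + 1 := by omega
    have h3 : (i - (k + 2)) / 2 = (i - k - 2) / 2 := by omega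
    rw [h1, h2, h3, Nat.choose_succ_succ']
    ring
  · -- k = i or k = i - 1
    rw [hg_zero (by omega : i < k + 2)]
    simp only [hg, if_pos (by omega : k + 1 ≤ i + 1), if_pos hk]
    have h1 : (i + 1 - (k + 1)) / 2 = 0 := by omega
    have h2 : (i - k) / 2 = 0 := by omega
    rw [h1, h2]
    simp

/-- The key convolution identity. -/
lemma hg_key : ∀ i j N : ℕ, i + j + 2 ≤ N →
    ∑ k ∈ Finset.range N, hg i k * hg j k = (i + j).choose ((i + j) / 2) := by
  intro i
  induction i with
  | zero =>
    intro j N hN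
    obtain ⟨M, rfl⟩ : ∃ M, N = M + 1 := ⟨N - 1, by omega⟩
    rw [Finset.sum_range_succ']
    have : ∀ k ∈ Finset.range M, hg 0 (k + 1) * hg j (k + 1) = 0 := by
      intro k _; rw [hg_zero (by omega)]; ring
    rw [Finset.sum_congr rfl this]
    simp [hg]
  | succ i ih =>
    intro j N hN
    have key : ∑ k ∈ Finset.range N, hg (i + 1) k * hg j k
        = ∑ k ∈ Finset.range N, hg i k * hg (j + 1) k := by
      obtain ⟨M, rfl⟩ : ∃ M, N = M + 2 := ⟨N - 2, by omega⟩
      rw [Finset.sum_range_succ' (fun k => hg (i+1) k * hg j k) (M+1),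
          Finset.sum_range_succ' (fun k => hg i k * hg (j+1) k) (M+1)]
      simp only [hg_rec0, hg_recS]
      have expand : ∀ a b c d : ℕ, (a + b) * (c + d) = a*c + a*d + b*c + b*d := by
        intro a b c d; ring
      simp only [expand, add_mul, mul_add, Finset.sum_add_distrib]
      -- Claim A: ∑_{k<M+1} hg i (k+2) * hg j (k+1) + hg i 1 * hg j 0
      --        = ∑_{k<M+1} hg i (k+1) * hg j k
      have hA : ∑ k ∈ Finset.range (M+1), hg i (k+2) * hg j (k+1) + hg i 1 * hg j 0
          = ∑ k ∈ Finset.range (M+1), hg i (k+1) * hg j k := by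
        rw [Finset.sum_range_succ' (fun k => hg i (k+1) * hg j k) M,
            Finset.sum_range_succ (fun k => hg i (k+2) * hg j (k+1)) M]
        rw [hg_zero (by omega : i < M + 2)]
        ring
      have hB : ∑ k ∈ Finset.range (M+1), hg i k * hg j (k+1)
          = ∑ k ∈ Finset.range (M+1), hg i (k+1) * hg j (k+2) + hg i 0 * hg j 1 := by
        rw [Finset.sum_range_succ' (fun k => hg i k * hg j (k+1)) M,
            Finset.sum_range_succ (fun k => hg i (k+1) * hg j (k+2)) M]
        rw [hg_zero (by omega : j < M + 2)]
        ring
      omega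
    rw [key, ih (j + 1) N (by omega)]
    have e : i + (j + 1) = i + 1 + j := by omega
    rw [e]

/-- The `n×n` Hankel determinant of the middle binomial coefficients
`b(m) = C(m, ⌊m/2⌋)` equals `1`. -/
theorem stmt4 (n : ℕ) (hn : 1 ≤ n) :
    Matrix.det (Matrix.of fun i j : Fin n =>
      (((i.val + j.val).choose ((i.val + j.val) / 2) : ℕ) : ℤ)) = 1 := by
  set B : Matrix (Fin n) (Fin n) ℤ := Matrix.of fun i k : Fin n => (hg i.val k.val : ℤ)
  have hfact : (Matrix.of fun i j : Fin n =>
      (((i.val + j.val).choose ((i.val + j.val) / 2) : ℕ) : ℤ)) = B * B.transpose := by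
    ext i j
    simp only [Matrix.mul_apply, Matrix.transpose_apply, Matrix.of_apply, B]
    have : ∑ k : Fin n, (hg i.val k.val : ℤ) * (hg j.val k.val : ℤ)
        = ((∑ k ∈ Finset.range n, hg i.val k * hg j.val k : ℕ) : ℤ) := by
      push_cast
      rw [Finset.sum_range fun k => (hg i.val k : ℤ) * (hg j.val k : ℤ)]
    rw [this]
    have hext : ∑ k ∈ Finset.range n, hg i.val k * hg j.val k
        = ∑ k ∈ Finset.range (n + i.val + j.val + 2), hg i.val k * hg j.val k := by
      refine Finset.sum_subset (Finset.range_subset_range.mpr (by omega)) ?_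
      intro k _ hk
      simp only [Finset.mem_range, not_lt] at hk
      rw [hg_zero (by omega : i.val < k)]
      ring
    rw [hext, hg_key _ _ _ (by omega)]
  rw [hfact, Matrix.det_mul, Matrix.det_transpose]
  have hB : B.det = 1 := by
    have : B.det = ∏ i : Fin n, B i i := by
      apply Matrix.det_of_lowerTriangular
      intro i j hij
      have h2 : (i : ℕ) < (j : ℕ) := hij
      simp only [Matrix.of_apply, B]
      rw [hg_zero h2]
      simp
    rw [this]
    simp [B, Matrix.of_apply, hg_diag]
  rw [hB]; ring
end

section
/- For every natural number n ≥ 1, the n×n Hankel determinant det( C(1+i+j, ⌊(1+i+j)/2⌋) )_{i,j=0}^{n-1} of the shifted middle binomial coefficients equals (-1)^{C(n,2)}. -/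
def Ch (n : ℕ) (k : ℤ) : ℤ := if 0 ≤ k then (n.choose k.toNat : ℤ) else 0

/-- Lower-triangular matrix entries for the LDLᵀ decomposition. -/
def LL (n k : ℕ) : ℤ :=
  if n % 2 = 0 then
    if k % 2 = 0 then Ch (n + 1) ((n / 2 : ℕ) - (k / 2 : ℕ) : ℤ) else 0
  else
    if k % 2 = 0 then 2 * Ch n ((n / 2 : ℕ) - (k / 2 : ℕ) : ℤ)
    else Ch n ((n / 2 : ℕ) - (k / 2 : ℕ) : ℤ) - Ch n ((n / 2 : ℕ) - (k / 2 : ℕ) - 1 : ℤ)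

lemma LL_ee (m j : ℕ) : LL (2 * m) (2 * j) = Ch (2 * m + 1) ((m : ℤ) - j) := by
  simp [LL, Nat.mul_div_cancel_left, Nat.mul_mod_right]

lemma LL_eo (m j : ℕ) : LL (2 * m) (2 * j + 1) = 0 := by
  simp [LL, Nat.mul_mod_right, Nat.add_mod, Nat.mul_mod]

lemma LL_oe (m j : ℕ) : LL (2 * m + 1) (2 * j) = 2 * Ch (2 * m + 1) ((m : ℤ) - j) := by
  have h1 : (2 * m + 1) % 2 = 1 := by omega
  have h2 : (2 * m + 1) / 2 = m := by omega
  simp [LL, h1, h2, Nat.mul_div_cancel_left, Nat.mul_mod_right]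

lemma LL_oo (m j : ℕ) :
    LL (2 * m + 1) (2 * j + 1) = Ch (2 * m + 1) ((m : ℤ) - j) - Ch (2 * m + 1) ((m : ℤ) - j - 1) := by
  have h1 : (2 * m + 1) % 2 = 1 := by omega
  have h2 : (2 * m + 1) / 2 = m := by omega
  have h3 : (2 * j + 1) % 2 = 1 := by omega
  have h4 : (2 * j + 1) / 2 = j := by omega
  simp [LL, h1, h2, h3, h4]

lemma Ch_neg (n : ℕ) {k : ℤ} (h : k < 0) : Ch n k = 0 := by
  simp [Ch, not_le.mpr h]

lemma Ch_nat (n j : ℕ) : Ch n (j : ℤ) = (n.choose j : ℤ) := by simp [Ch]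

lemma Ch_pascal (n : ℕ) (k : ℤ) : Ch (n + 1) k = Ch n k + Ch n (k - 1) := by
  rcases lt_trichotomy k 0 with h | h | h
  · rw [Ch_neg _ h, Ch_neg _ h, Ch_neg _ (by omega), add_zero]
  · subst h
    simp [Ch, Ch_neg n (show (0:ℤ)-1 < 0 by norm_num)]
  · obtain ⟨j, rfl⟩ : ∃ j : ℕ, k = (j : ℤ) + 1 := ⟨(k - 1).toNat, by omega⟩
    have : ((j:ℤ) + 1) - 1 = (j : ℤ) := by ring
    rw [this]
    have h1 : ((j:ℤ)+1) = ((j+1 : ℕ) : ℤ) := by push_cast; ring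
    rw [h1, Ch_nat, Ch_nat, Ch_nat, Nat.choose_succ_succ]
    push_cast; ring

lemma Ch_symm_half (m : ℕ) : Ch (2 * m + 1) ((m : ℤ) + 1) = Ch (2 * m + 1) (m : ℤ) := by
  have : ((m : ℤ) + 1) = ((m + 1 : ℕ) : ℤ) := by push_cast; ring
  rw [this, Ch_nat, Ch_nat]
  norm_cast
  have h2 : (2*m+1).choose (m+1) = (2*m+1).choose ((2*m+1) - (m+1)) :=
    (Nat.choose_symm (by omega)).symm
  rw [h2, show 2*m+1-(m+1) = m from by omega]

lemma Ch_zero (n : ℕ) : Ch n 0 = 1 := by simp [Ch]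

lemma LL_zero {n k : ℕ} (h : n < k) : LL n k = 0 := by
  rcases Nat.even_or_odd n with ⟨m, hm⟩ | ⟨m, hm⟩ <;>
  rcases Nat.even_or_odd k with ⟨j, hj⟩ | ⟨j, hj⟩ <;> subst hm <;> subst hj
  · have hneg : ((m:ℤ) - j) < 0 := by omega
    rw [(by ring : m + m = 2 * m), (by ring : j + j = 2 * j), LL_ee, Ch_neg _ hneg]
  · rw [(by ring : m + m = 2 * m), LL_eo]
  · have hneg : ((m:ℤ) - j) < 0 := by omega
    rw [(by ring : j + j = 2 * j), LL_oe, Ch_neg _ hneg, mul_zero]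
  · have hneg : ((m:ℤ) - j) < 0 := by omega
    have hneg2 : ((m:ℤ) - j - 1) < 0 := by omega
    rw [LL_oo, Ch_neg _ hneg, Ch_neg _ hneg2, sub_zero]

lemma LL_diag (n : ℕ) : LL n n = 1 := by
  rcases Nat.even_or_odd n with ⟨m, hm⟩ | ⟨m, hm⟩ <;> subst hm
  · rw [(by ring : m + m = 2 * m), LL_ee, sub_self, Ch_zero]
  · rw [LL_oo, sub_self, Ch_neg _ (show (0:ℤ) - 1 < 0 by norm_num), Ch_zero, sub_zero]

lemma LL_e0 (m : ℕ) : LL (2*m) 0 = Ch (2*m+1) (m:ℤ) := by simpa using LL_ee m 0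
lemma LL_e1 (m : ℕ) : LL (2*m) 1 = 0 := by simpa using LL_eo m 0
lemma LL_o0 (m : ℕ) : LL (2*m+1) 0 = 2 * Ch (2*m+1) (m:ℤ) := by simpa using LL_oe m 0
lemma LL_o1 (m : ℕ) : LL (2*m+1) 1 = Ch (2*m+1) (m:ℤ) - Ch (2*m+1) ((m:ℤ)-1) := by
  simpa using LL_oo m 0

lemma LL_rec0 (n : ℕ) : LL (n + 1) 0 = 2 * LL n 0 - LL n 1 := by
  rcases Nat.even_or_odd n with ⟨m, hm⟩ | ⟨m, hm⟩ <;> subst hm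
  · rw [(by ring : m + m = 2 * m), LL_o0, LL_e0, LL_e1]
    ring
  · rw [show (2*m+1+1 : ℕ) = 2*(m+1) from by ring, LL_e0, LL_o0, LL_o1]
    have p1 : Ch (2*(m+1)+1) ((m+1:ℕ):ℤ) = Ch (2*m+2) ((m:ℤ)+1) + Ch (2*m+2) ((m:ℤ)) := by
      rw [show (2*(m+1)+1 : ℕ) = (2*m+2)+1 from by ring, Ch_pascal]
      push_cast; ring_nf
    have p2 : Ch (2*m+2) ((m:ℤ)+1) = Ch (2*m+1) ((m:ℤ)+1) + Ch (2*m+1) ((m:ℤ)) := by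
      rw [show (2*m+2 : ℕ) = (2*m+1)+1 from by ring, Ch_pascal]; ring_nf
    have p3 : Ch (2*m+2) ((m:ℤ)) = Ch (2*m+1) ((m:ℤ)) + Ch (2*m+1) ((m:ℤ)-1) := by
      rw [show (2*m+2 : ℕ) = (2*m+1)+1 from by ring, Ch_pascal]
    rw [p1, p2, p3, Ch_symm_half]
    ring

lemma LL_rec (n k : ℕ) :
    LL (n+1) (k+1) = LL n k + 2 * (-1:ℤ)^(k+1) * LL n (k+1) - LL n (k+2) := by
  have podd : ∀ j : ℕ, (-1:ℤ)^(2*j+1) = -1 := fun j => Odd.neg_one_pow ⟨j, by ring⟩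
  have peven : ∀ j : ℕ, (-1:ℤ)^(2*(j+1)) = 1 := fun j => Even.neg_one_pow ⟨j+1, by ring⟩
  rcases Nat.even_or_odd n with ⟨m, hm⟩ | ⟨m, hm⟩ <;>
  rcases Nat.even_or_odd k with ⟨j, hj⟩ | ⟨j, hj⟩ <;> subst hm <;> subst hj
  · rw [show m+m = 2*m from by ring, show j+j = 2*j from by ring, LL_oo m j, LL_ee m j,
      LL_eo m j, show (2*j+1+1:ℕ) = 2*(j+1) from by ring, LL_ee m (j+1), podd,
      show (m:ℤ) - ((j+1:ℕ):ℤ) = (m:ℤ)-j-1 from by push_cast; ring]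
    ring
  · rw [show m+m = 2*m from by ring, show (2*j+1+1:ℕ) = 2*(j+1) from by ring,
      LL_oe m (j+1), LL_eo m j, LL_ee m (j+1),
      show (2*j+1+2:ℕ) = 2*(j+1)+1 from by ring, LL_eo m (j+1), peven]
    ring
  · rw [show j+j = 2*j from by ring, show (2*m+1+1:ℕ) = 2*(m+1) from by ring,
      LL_eo (m+1) j, LL_oe m j, LL_oo m j, show (2*j+1+1:ℕ) = 2*(j+1) from by ring,
      LL_oe m (j+1), podd,
      show (m:ℤ) - ((j+1:ℕ):ℤ) = (m:ℤ)-j-1 from by push_cast; ring]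
    ring
  · rw [show (2*m+1+1:ℕ) = 2*(m+1) from by ring, show (2*j+1+1:ℕ) = 2*(j+1) from by ring,
      LL_ee (m+1) (j+1), LL_oo m j, show (2*j+1+2:ℕ) = 2*(j+1)+1 from by ring,
      LL_oo m (j+1), peven]
    have p1 : Ch (2*(m+1)+1) (((m+1:ℕ):ℤ) - ((j+1:ℕ):ℤ))
        = Ch (2*m+2) ((m:ℤ)-j) + Ch (2*m+2) ((m:ℤ)-j-1) := by
      rw [show (2*(m+1)+1:ℕ) = (2*m+2)+1 from by ring, Ch_pascal]
      push_cast; ring_nf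
    have p2 : Ch (2*m+2) ((m:ℤ)-j) = Ch (2*m+1) ((m:ℤ)-j) + Ch (2*m+1) ((m:ℤ)-j-1) := by
      rw [show (2*m+2:ℕ) = (2*m+1)+1 from by ring, Ch_pascal]
    have p3 : Ch (2*m+2) ((m:ℤ)-j-1) = Ch (2*m+1) ((m:ℤ)-j-1) + Ch (2*m+1) ((m:ℤ)-j-2) := by
      rw [show (2*m+2:ℕ) = (2*m+1)+1 from by ring, Ch_pascal]
      ring_nf
    rw [p1, p2, p3, LL_oe m (j+1),
      show ((m:ℤ) - ((j+1:ℕ):ℤ)) = (m:ℤ)-j-1 from by push_cast; ring,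
      show ((m:ℤ) - (j:ℤ) - 1 - 1) = (m:ℤ)-j-2 from by ring]
    ring

lemma LL_col0 (n : ℕ) : LL n 0 = (((n+1).choose ((n+1)/2) : ℕ) : ℤ) := by
  rcases Nat.even_or_odd n with ⟨m, hm⟩ | ⟨m, hm⟩ <;> subst hm
  · rw [show m+m = 2*m from by ring, LL_e0, show (2*m+1)/2 = m from by omega, Ch_nat]
  · rw [LL_o0, show (2*m+1+1)/2 = m+1 from by omega,
      show (2*m+1+1 : ℕ) = (2*m+1)+1 from rfl, Nat.choose_succ_succ, Ch_nat]
    have := Ch_symm_half m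
    rw [show ((m:ℤ)+1) = ((m+1:ℕ):ℤ) from by push_cast; ring, Ch_nat, Ch_nat] at this
    simp only [Nat.succ_eq_add_one] at this ⊢
    push_cast
    omega

/-- The fiber sum in the LDLᵀ decomposition. -/
def S (i j : ℕ) : ℤ := ∑ k ∈ Finset.range (i+j+2), (-1:ℤ)^k * LL i k * LL j k

lemma key_telescope (i j k : ℕ) :
    (-1:ℤ)^k * LL (i+1) k * LL j k - (-1:ℤ)^k * LL i k * LL (j+1) k
      = ((-1:ℤ)^k * (LL i (k-1) * LL j k - LL i k * LL j (k-1)))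
        - ((-1:ℤ)^(k+1) * (LL i k * LL j (k+1) - LL i (k+1) * LL j k)) := by
  cases k with
  | zero => rw [LL_rec0 i, LL_rec0 j]; simp; ring
  | succ k =>
      rw [LL_rec i k, LL_rec j k, show (k+1-1 : ℕ) = k from rfl]
      ring

lemma S_shift (i j : ℕ) : S (i+1) j = S i (j+1) := by
  have h1 : S (i+1) j - S i (j+1) =
      ∑ k ∈ Finset.range (i+j+3),
        (((-1:ℤ)^k * (LL i (k-1) * LL j k - LL i k * LL j (k-1)))
          - ((-1:ℤ)^(k+1) * (LL i k * LL j (k+1) - LL i (k+1) * LL j k))) := by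
    rw [S, S, show i+1+j+2 = i+j+3 from by ring, show i+(j+1)+2 = i+j+3 from by ring,
      ← Finset.sum_sub_distrib]
    exact Finset.sum_congr rfl fun k _ => key_telescope i j k
  have h2 := Finset.sum_range_sub'
    (fun k => (-1:ℤ)^k * (LL i (k-1) * LL j k - LL i k * LL j (k-1))) (i+j+3)
  simp only [Nat.add_sub_cancel] at h2
  rw [h2] at h1
  simp only [show (0-1 : ℕ) = 0 from rfl, show (i+j+3-1 : ℕ) = i+j+2 from rfl] at h1
  rw [LL_zero (show i < i+j+2 by omega), LL_zero (show i < i+j+3 by omega)] at h1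
  simp at h1
  linarith [h1]

lemma S_base (j : ℕ) : S 0 j = LL j 0 := by
  rw [S]
  rw [Finset.sum_eq_single 0]
  · simp [LL_diag 0]
  · intro k _ hk
    rw [LL_zero (show 0 < k by omega)]
    ring
  · intro h; simp at h

lemma S_eq (i j : ℕ) : S i j = (((i+j+1).choose ((i+j+1)/2) : ℕ) : ℤ) := by
  induction i generalizing j with
  | zero => rw [S_base, LL_col0]; norm_num
  | succ i ih =>
      rw [S_shift, ih (j+1), show i+(j+1)+1 = i+1+j+1 from by ring]

lemma sum_trim (a b : ℕ) {N : ℕ} (hN : a < N) :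
    ∑ k ∈ Finset.range N, (-1:ℤ)^k * LL a k * LL b k = S a b := by
  have key : ∀ M, a < M →
      ∑ k ∈ Finset.range (a+1), (-1:ℤ)^k * LL a k * LL b k
        = ∑ k ∈ Finset.range M, (-1:ℤ)^k * LL a k * LL b k := by
    intro M hM
    refine Finset.sum_subset (Finset.range_subset_range.2 (by omega)) fun x _ hx => ?_
    rw [LL_zero (show a < x by simp at hx; omega)]
    ring
  rw [← key N hN, S, key (a+b+2) (by omega)]

/-- The `n×n` Hankel determinant of the shifted middle binomial coefficients
`b(1+i+j) = C(1+i+j, ⌊(1+i+j)/2⌋)` equals `(-1)^(C(n,2))`. -/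
theorem stmt5 (n : ℕ) (hn : 1 ≤ n) :
    Matrix.det (Matrix.of fun i j : Fin n =>
      (((1 + i.val + j.val).choose ((1 + i.val + j.val) / 2) : ℕ) : ℤ))
      = (-1) ^ n.choose 2 := by
  set A : Matrix (Fin n) (Fin n) ℤ := Matrix.of fun i k => LL i.val k.val with hA
  set D : Matrix (Fin n) (Fin n) ℤ := Matrix.diagonal fun k : Fin n => (-1:ℤ)^(k:ℕ) with hD
  have hH : (Matrix.of fun i j : Fin n =>
      (((1 + i.val + j.val).choose ((1 + i.val + j.val) / 2) : ℕ) : ℤ)) = A * D * A.transpose := by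
    ext i j
    have hprod : (A * D * A.transpose) i j
        = ∑ k : Fin n, (-1:ℤ)^(k:ℕ) * LL i.val k.val * LL j.val k.val := by
      rw [Matrix.mul_apply]
      refine Finset.sum_congr rfl fun k _ => ?_
      rw [hD, Matrix.mul_diagonal, Matrix.transpose_apply, hA, Matrix.of_apply,
        Matrix.of_apply]
      ring
    rw [Matrix.of_apply, hprod]
    rw [Fin.sum_univ_eq_sum_range (fun k => (-1:ℤ)^k * LL i.val k * LL j.val k) n]
    rw [sum_trim i.val j.val i.isLt, S_eq]
    congr 2 <;> omega
  rw [hH, Matrix.det_mul, Matrix.det_mul, Matrix.det_transpose]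
  have hAtri : A.BlockTriangular OrderDual.toDual := by
    intro i j hlt
    exact LL_zero hlt
  have hdetA : A.det = 1 := by
    rw [Matrix.det_of_lowerTriangular A hAtri]
    simp [hA, LL_diag]
  have hdetD : D.det = (-1:ℤ) ^ n.choose 2 := by
    rw [hD, Matrix.det_diagonal, Finset.prod_pow_eq_pow_sum]
    congr 1
    rw [Fin.sum_univ_eq_sum_range (fun k => k) n, Nat.choose_two_right]
    have := Finset.sum_range_id_mul_two n
    omega
  rw [hdetA, hdetD]
  ring
end

section
/- For all natural numbers k and n ≥ 1, the n×n Hankel determinant D_k(n) = det( C(k+i+j, ⌊(k+i+j)/2⌋) )_{i,j=0}^{n-1} satisfies (-1)^{k·C(n,2)}·D_k(n) = ∏_{j=1}^{k} ((j+n)/j)^{min(j, k-j)} = ∏_{i=1}^{⌊k/2⌋} ∏_{j=1}^{⌈k/2⌉} (i+j+n-1)/(i+j-1) (an equality of rational numbers, both sides in fact being positive integers). -/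
open Finset Matrix



/-- rising factorial as a rational: `∏_{i=1}^s (i+c)` -/
def ff (c s : ℕ) : ℚ := ∏ i ∈ Icc 1 s, ((i : ℚ) + c)

lemma ff_pos (c s : ℕ) : 0 < ff c s := by
  apply Finset.prod_pos
  intro i hi
  have := (Finset.mem_Icc.1 hi).1
  have : (1:ℚ) ≤ (i:ℚ) := by exact_mod_cast this
  positivity

lemma ff_ne (c s : ℕ) : ff c s ≠ 0 := (ff_pos c s).ne'

lemma ff_succ (c s : ℕ) : ff c (s+1) = ff c s * ((s:ℚ) + 1 + c) := by
  rw [ff, ff, Finset.prod_Icc_succ_top (by omega)]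
  push_cast; ring

lemma ff_shift (c s : ℕ) : ff (c+1) s * ((1:ℚ) + c) = ff c s * ((s:ℚ) + 1 + c) := by
  induction s with
  | zero => simp [ff]
  | succ s ih =>
    rw [ff_succ, ff_succ]
    push_cast at ih ⊢
    nlinarith [ih]

/-- the double product -/
def Gp (a b n : ℕ) : ℚ :=
  ∏ i ∈ Icc 1 a, ∏ j ∈ Icc 1 b, ((i : ℚ) + j + n - 1) / ((i : ℚ) + j - 1)

lemma Gp_pos (a b n : ℕ) : 0 < Gp a b n := by
  apply Finset.prod_pos
  intro i hi
  apply Finset.prod_pos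
  intro j hj
  have hi1 := (Finset.mem_Icc.1 hi).1
  have hj1 := (Finset.mem_Icc.1 hj).1
  have hi1 : (1:ℚ) ≤ (i:ℚ) := by exact_mod_cast hi1
  have hj1 : (1:ℚ) ≤ (j:ℚ) := by exact_mod_cast hj1
  have hn : (0:ℚ) ≤ (n:ℚ) := by positivity
  apply div_pos <;> linarith

lemma Gp_ne (a b n : ℕ) : Gp a b n ≠ 0 := (Gp_pos a b n).ne'

lemma Gp_zero (b n : ℕ) : Gp 0 b n = 1 := by simp [Gp]

lemma Gp_symm (a b n : ℕ) : Gp a b n = Gp b a n := by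
  rw [Gp, Gp, Finset.prod_comm]
  apply Finset.prod_congr rfl; intro i _
  apply Finset.prod_congr rfl; intro j _
  ring_nf

/-- add a row -/
lemma Gp_row (a b n : ℕ) : Gp (a+1) b n = Gp a b n * (ff (a+n) b / ff a b) := by
  rw [Gp, Gp, Finset.prod_Icc_succ_top (by omega : 1 ≤ a + 1)]
  congr 1
  rw [ff, ff, ← Finset.prod_div_distrib]
  apply Finset.prod_congr rfl; intro j _
  push_cast; ring_nf

/-- add a column -/
lemma Gp_col (a b n : ℕ) : Gp a (b+1) n = Gp a b n * (ff (b+n) a / ff b a) := by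
  rw [Gp_symm, Gp_row, Gp_symm]

/-- shift n -/
lemma Gp_shift (a b n : ℕ) : Gp a b (n+1) = Gp a b n * (ff (b+n) a / ff n a) := by
  induction a with
  | zero => simp [Gp_zero, ff]
  | succ a ih =>
    rw [Gp_row, Gp_row, ih]
    have h1 := ff_shift (a+n) b
    have h2 := ff_succ (b+n) a
    have h3 := ff_succ n a
    have e1 : a + (n+1) = (a+n)+1 := by omega
    rw [e1]
    have hb := ff_ne a b
    have hbn := ff_ne (b+n) a
    have hna := ff_ne n a
    have hab := ff_ne (a+n) b
    have h4 : ff ((a+n)+1) b = ff (a+n) b * ((b:ℚ) + 1 + (a+n)) / ((1:ℚ) + (a+n)) := by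
      field_simp at h1 ⊢
      push_cast at h1 ⊢
      linarith [h1]
    rw [h4, h2, h3]
    have c1 : ((1:ℚ) + ((a:ℚ)+(n:ℚ))) ≠ 0 := by positivity
    push_cast
    field_simp
    ring

set_option maxHeartbeats 2000000 in
/-- condensation identity, even case -/
lemma Gp_CE (a m : ℕ) :
    Gp a a (m+2) * Gp (a+1) (a+1) m
      = Gp a a (m+1) * Gp (a+1) (a+1) (m+1) - Gp a (a+1) (m+1)^2 := by
  have h1 : Gp a a (m+2) = Gp a a (m+1) * (ff (a+m+1) a / ff (m+1) a) := by
    have := Gp_shift a a (m+1); rwa [show a+(m+1) = a+m+1 from rfl] at this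
  have h2 : Gp a (a+1) (m+1) = Gp a a (m+1) * (ff (a+m+1) a / ff a a) := by
    have := Gp_col a a (m+1); rwa [show a+(m+1) = a+m+1 from rfl] at this
  have h3 : Gp (a+1) (a+1) (m+1)
      = Gp a (a+1) (m+1) * (ff (a+m+1) (a+1) / ff a (a+1)) := by
    have := Gp_row a (a+1) (m+1); rwa [show a+(m+1) = a+m+1 from rfl] at this
  have h4 : Gp (a+1) (a+1) (m+1)
      = Gp (a+1) (a+1) m * (ff (a+m+1) (a+1) / ff m (a+1)) := by
    have := Gp_shift (a+1) (a+1) m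
    rwa [show (a+1)+m = a+m+1 by omega] at this
  have h5 : Gp (a+1) (a+1) m
      = Gp a (a+1) (m+1) * (ff (a+m+1) (a+1) / ff a (a+1)) * (ff m (a+1) / ff (a+m+1) (a+1)) := by
    rw [← h3, h4]; field_simp [ff_ne]
  have eU : ff (a+m+1) (a+1) = ff (a+m+1) a * ((a:ℚ) + 1 + (a+m+1)) := by
    have := ff_succ (a+m+1) a; push_cast at this ⊢; linarith
  have eW : ff a (a+1) = ff a a * ((a:ℚ) + 1 + a) := by
    have := ff_succ a a; push_cast at this ⊢; linarith
  have eV : ff m (a+1) = ff m a * ((a:ℚ) + 1 + m) := by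
    have := ff_succ m a; push_cast at this ⊢; linarith
  have eP : ff (m+1) a = ff m a * ((a:ℚ) + 1 + m) / ((1:ℚ) + m) := by
    have h := ff_shift m a
    rw [eq_div_iff (by positivity : ((1:ℚ)+(m:ℚ)) ≠ 0)]
    push_cast at h ⊢
    linarith
  rw [h1, h5, h3, h2, eU, eW, eV, eP]
  have n1 := ff_ne (a+m+1) a
  have n2 := ff_ne a a
  have n3 := ff_ne m a
  have q1 := Gp_ne a a (m+1)
  have c1 : ((a:ℚ) + 1 + (a+m+1)) ≠ 0 := by positivity
  have c2 : ((a:ℚ) + 1 + a) ≠ 0 := by positivity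
  have c3 : ((a:ℚ) + 1 + m) ≠ 0 := by positivity
  have c4 : ((1:ℚ) + m) ≠ 0 := by positivity
  field_simp
  ring

set_option maxHeartbeats 2000000 in
/-- condensation identity, odd case -/
lemma Gp_CO (a m : ℕ) :
    Gp (a+1) (a+1) (m+1)^2
      = Gp a (a+1) (m+1) * Gp (a+1) (a+2) (m+1)
        + Gp a (a+1) (m+2) * Gp (a+1) (a+2) m := by
  have h1 : Gp (a+1) (a+1) (m+1)
      = Gp a (a+1) (m+1) * (ff (a+m+1) (a+1) / ff a (a+1)) := by
    have := Gp_row a (a+1) (m+1); rwa [show a+(m+1) = a+m+1 from rfl] at this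
  have h2 : Gp (a+1) (a+2) (m+1)
      = Gp (a+1) (a+1) (m+1) * (ff (a+m+2) (a+1) / ff (a+1) (a+1)) := by
    have := Gp_col (a+1) (a+1) (m+1)
    rwa [show (a+1)+(m+1) = a+m+2 by omega] at this
  have h3 : Gp a (a+1) (m+2) = Gp a (a+1) (m+1) * (ff (a+m+2) a / ff (m+1) a) := by
    have := Gp_shift a (a+1) (m+1)
    rwa [show (a+1)+(m+1) = a+m+2 by omega] at this
  have h4 : Gp (a+1) (a+2) (m+1)
      = Gp (a+1) (a+2) m * (ff (a+m+2) (a+1) / ff m (a+1)) := by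
    have := Gp_shift (a+1) (a+2) m
    rwa [show (a+2)+m = a+m+2 by omega] at this
  have h5 : Gp (a+1) (a+2) m
      = Gp (a+1) (a+1) (m+1) * (ff (a+m+2) (a+1) / ff (a+1) (a+1))
          * (ff m (a+1) / ff (a+m+2) (a+1)) := by
    rw [← h2, h4]; field_simp [ff_ne]
  -- reduce all ff's with s = a+1 or shifted c to base ones
  have eA : ff (a+m+1) (a+1) = ff (a+m+1) a * ((a:ℚ) + 1 + (a+m+1)) := by
    have := ff_succ (a+m+1) a; push_cast at this ⊢; linarith
  have eB : ff a (a+1) = ff a a * ((a:ℚ) + 1 + a) := by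
    have := ff_succ a a; push_cast at this ⊢; linarith
  have eC : ff (a+m+2) (a+1) = ff (a+m+2) a * ((a:ℚ) + 1 + (a+m+2)) := by
    have := ff_succ (a+m+2) a; push_cast at this ⊢; linarith
  have eD : ff (a+1) (a+1) = ff (a+1) a * ((a:ℚ) + 1 + (a+1)) := by
    have := ff_succ (a+1) a; push_cast at this ⊢; linarith
  have eE : ff m (a+1) = ff m a * ((a:ℚ) + 1 + m) := by
    have := ff_succ m a; push_cast at this ⊢; linarith
  -- shift relations
  have sA : ff (a+m+2) a = ff (a+m+1) a * ((a:ℚ) + 1 + ((a:ℚ)+m+1)) / ((1:ℚ) + ((a:ℚ)+m+1)) := by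
    have h := ff_shift (a+m+1) a
    rw [show a+m+2 = a+m+1+1 by omega, eq_div_iff (by positivity : ((1:ℚ)+((a:ℚ)+m+1)) ≠ 0)]
    push_cast at h ⊢
    linarith
  have sB : ff (a+1) a = ff a a * ((a:ℚ) + 1 + a) / ((1:ℚ) + a) := by
    have h := ff_shift a a
    rw [eq_div_iff (by positivity : ((1:ℚ)+(a:ℚ)) ≠ 0)]
    push_cast at h ⊢
    linarith
  have sC : ff (m+1) a = ff m a * ((a:ℚ) + 1 + m) / ((1:ℚ) + m) := by
    have h := ff_shift m a
    rw [eq_div_iff (by positivity : ((1:ℚ)+(m:ℚ)) ≠ 0)]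
    push_cast at h ⊢
    linarith
  rw [h5, h3, h2, h1, eA, eB, eC, eD, eE, sA, sB, sC]
  have n1 := ff_ne (a+m+1) a
  have n2 := ff_ne a a
  have n3 := ff_ne m a
  have q1 := Gp_ne a (a+1) (m+1)
  have c1 : ((a:ℚ) + 1 + ((a:ℚ)+m+1)) ≠ 0 := by positivity
  have c2 : ((a:ℚ) + 1 + a) ≠ 0 := by positivity
  have c3 : ((a:ℚ) + 1 + m) ≠ 0 := by positivity
  have c4 : ((1:ℚ) + (m:ℚ)) ≠ 0 := by positivity
  have c5 : ((1:ℚ) + ((a:ℚ)+m+1)) ≠ 0 := by positivity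
  have c6 : ((1:ℚ) + (a:ℚ)) ≠ 0 := by positivity
  have c7 : ((a:ℚ) + 1 + ((a:ℚ)+m+2)) ≠ 0 := by positivity
  have c8 : ((a:ℚ) + 1 + ((a:ℚ)+1)) ≠ 0 := by positivity
  push_cast
  field_simp
  ring

def Qp (k n : ℕ) : ℚ := ∏ j ∈ Icc 1 k, (((j:ℚ) + n) / j) ^ (min j (k-j))

lemma shift_prod (g : ℕ → ℚ) (a s : ℕ) :
    ∏ j ∈ Icc (a+1) (a+s), g j = ∏ i ∈ Icc 1 s, g (i+a) := by
  induction s with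
  | zero => simp
  | succ s ih =>
    rw [show a+(s+1) = (a+s)+1 from rfl,
      Finset.prod_Icc_succ_top (by omega : a+1 ≤ a+s+1),
      Finset.prod_Icc_succ_top (by omega : 1 ≤ s+1), ih,
      show s+1+a = a+s+1 by omega]

lemma Qp_step (k n : ℕ) :
    Qp (k+1) n = Qp k n * ∏ j ∈ Icc (k/2+1) k, ((j:ℚ) + n) / j := by
  rw [Qp, Finset.prod_Icc_succ_top (by omega : 1 ≤ k+1)]
  rw [show min (k+1) (k+1-(k+1)) = 0 by omega, pow_zero, mul_one]
  have : ∀ j ∈ Icc 1 k,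
      (((j:ℚ) + n) / j) ^ (min j (k+1-j))
        = (((j:ℚ) + n) / j) ^ (min j (k-j))
            * (if k/2+1 ≤ j then ((j:ℚ) + n) / j else 1) := by
    intro j hj
    have hj' := Finset.mem_Icc.1 hj
    by_cases h : k/2+1 ≤ j
    · rw [if_pos h, show min j (k+1-j) = min j (k-j) + 1 by omega, pow_succ]
    · rw [if_neg h, show min j (k+1-j) = min j (k-j) by omega, mul_one]
  rw [Finset.prod_congr rfl this, Finset.prod_mul_distrib, Qp]
  congr 1
  rw [← Finset.prod_filter]
  congr 1
  ext x
  simp only [Finset.mem_filter, Finset.mem_Icc]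
  omega

lemma part2 (k n : ℕ) : Qp k n = Gp (k/2) ((k+1)/2) n := by
  induction k with
  | zero => simp [Qp, Gp_zero]
  | succ k ih =>
    rw [Qp_step, ih]
    obtain ⟨a, rfl | rfl⟩ := Nat.even_or_odd' k
    · rw [show 2*a/2 = a by omega, show (2*a+1)/2 = a by omega,
        show (2*a+1+1)/2 = a+1 by omega, Gp_col]
      congr 1
      rw [show 2*a = a + a by omega, shift_prod, ff, ff, ← Finset.prod_div_distrib]
      apply Finset.prod_congr rfl
      intro i _
      push_cast
      ring
    · rw [show (2*a+1)/2 = a by omega, show (2*a+1+1)/2 = a+1 by omega,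
        show (2*a+1+1+1)/2 = a+1 by omega, Gp_row]
      congr 1
      rw [show 2*a+1 = a + (a+1) by omega, shift_prod, ff, ff, ← Finset.prod_div_distrib]
      apply Finset.prod_congr rfl
      intro i _
      push_cast
      ring

lemma base1 (k : ℕ) : ((k.choose (k/2) : ℕ) : ℚ) = Gp (k/2) ((k+1)/2) 1 := by
  induction k with
  | zero => simp [Gp_zero]
  | succ k ih =>
    obtain ⟨a, rfl | rfl⟩ := Nat.even_or_odd' k
    · rw [show (2*a+1)/2 = a by omega, show (2*a+1+1)/2 = a+1 by omega]
      rw [show 2*a/2 = a by omega, show (2*a+1)/2 = a by omega] at ih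
      rw [Gp_col, ← ih]
      have hnat : (2*a+1).choose a * (a+1) = (2*a).choose a * (2*a+1) := by
        have h1 := Nat.add_one_mul_choose_eq (2*a) a
        have h2 : (2*a+1).choose (a+1) = (2*a+1).choose a := by
          rw [← Nat.choose_symm (by omega : a+1 ≤ 2*a+1), show 2*a+1-(a+1) = a by omega]
        rw [h2] at h1
        rw [← h1, mul_comm]
      have hff : ff (a+1) a * ((1:ℚ) + a) = ff a a * ((a:ℚ) + 1 + a) := ff_shift a a
      have hne : ((1:ℚ) + (a:ℚ)) ≠ 0 := by positivity
      have hne2 := ff_ne a a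
      have hq : (((2*a+1).choose a : ℕ) : ℚ) * ((a:ℚ)+1)
          = (((2*a).choose a : ℕ) : ℚ) * (2*(a:ℚ)+1) := by exact_mod_cast hnat
      field_simp
      nlinarith [hq, hff, ff_pos a a, ff_pos (a+1) a]
    · rw [show (2*a+1+1)/2 = a+1 by omega, show (2*a+1+1+1)/2 = a+1 by omega]
      rw [show (2*a+1)/2 = a by omega, show (2*a+1+1)/2 = a+1 by omega] at ih
      rw [Gp_row, ← ih]
      have hnat : (2*a+2).choose (a+1) = 2 * ((2*a+1).choose a) := by
        have h1 : (2*a+2).choose (a+1) = (2*a+1).choose a + (2*a+1).choose (a+1) :=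
          Nat.choose_succ_succ (2*a+1) a
        have h2 : (2*a+1).choose (a+1) = (2*a+1).choose a := by
          rw [← Nat.choose_symm (by omega : a+1 ≤ 2*a+1), show 2*a+1-(a+1) = a by omega]
        omega
      have hff : ff (a+1) (a+1) * ((1:ℚ) + a) = ff a (a+1) * (((a:ℚ)+1) + 1 + a) := by
        have := ff_shift a (a+1); push_cast at this ⊢; linarith
      have hne : ((1:ℚ) + (a:ℚ)) ≠ 0 := by positivity
      have hne2 := ff_ne a (a+1)
      have hq : (((2*a+2).choose (a+1) : ℕ) : ℚ) = 2 * (((2*a+1).choose a : ℕ) : ℚ) := by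
        exact_mod_cast hnat
      rw [show 2*a+1+1 = 2*a+2 from rfl, hq]
      field_simp
      nlinarith [hff, ff_pos a (a+1), ff_pos (a+1) (a+1)]

lemma ch2 (n : ℕ) : (n+2).choose 2 = n.choose 2 + 2*n + 1 := by
  induction n with
  | zero => decide
  | succ n ih =>
    have h1 : (n+3).choose 2 = (n+2).choose 1 + (n+2).choose 2 := Nat.choose_succ_succ (n+2) 1
    have h2 : (n+1).choose 2 = n.choose 1 + n.choose 2 := Nat.choose_succ_succ n 1
    simp only [Nat.choose_one_right] at h1 h2
    rw [show n+1+2 = n+3 by omega]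
    omega

lemma sgn_eq (k n : ℕ) :
    (-1:ℚ)^(k*(n+2).choose 2) * (-1:ℚ)^((k+2)*n.choose 2) = (-1:ℚ)^k := by
  rw [← pow_add]
  have e : k*(n+2).choose 2 + (k+2)*n.choose 2
      = k + 2*(k*n.choose 2 + k*n + n.choose 2) := by rw [ch2]; ring
  rw [e, pow_add, pow_mul]
  norm_num

def cb (m : ℕ) : ℚ := ((m.choose (m / 2) : ℕ) : ℚ)

def hank (k n : ℕ) : Matrix (Fin n) (Fin n) ℚ :=
  Matrix.of fun i j => cb (k + i.val + j.val)

def Dk (k n : ℕ) : ℚ := (hank k n).det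

/-- border-splitting equivalence: interior first, then {0, n+1} -/
def eqv (n : ℕ) : (Fin n ⊕ Fin 2) ≃ Fin (n+2) where
  toFun x := Sum.elim (fun i : Fin n => (⟨i.val+1, by omega⟩ : Fin (n+2)))
    (fun y : Fin 2 => ⟨y.val * (n+1), by nlinarith [y.isLt]⟩) x
  invFun f := if h0 : f.val = 0 then Sum.inr 0
    else if h1 : f.val = n+1 then Sum.inr 1
    else Sum.inl ⟨f.val - 1, by omega⟩
  left_inv := by
    rintro (i | y)
    · have hi := i.isLt
      dsimp only [Sum.elim_inl]
      rw [dif_neg (by simp), dif_neg (by simp; omega)]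
      exact congrArg Sum.inl (Fin.ext (by simp))
    · fin_cases y
      · dsimp only [Sum.elim_inr]
        rw [dif_pos (by simp)]
        rfl
      · dsimp only [Sum.elim_inr]
        rw [dif_neg (by simp), dif_pos (by simp)]
        rfl
  right_inv := by
    intro f
    beta_reduce
    by_cases h0 : f.val = 0
    · rw [dif_pos h0]
      dsimp only [Sum.elim_inr]
      exact Fin.ext (by simp [h0])
    · by_cases h1 : f.val = n+1
      · rw [dif_neg h0, dif_pos h1]
        dsimp only [Sum.elim_inr]
        exact Fin.ext (by simp [h1])
      · rw [dif_neg h0, dif_neg h1]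
        dsimp only [Sum.elim_inl]
        exact Fin.ext (by simp; omega)

/-- interior-last equivalence -/
def gE (n : ℕ) : (Fin n ⊕ Fin 1) ≃ Fin (n+1) where
  toFun x := Sum.elim (fun i : Fin n => (⟨i.val, by omega⟩ : Fin (n+1)))
    (fun _ => ⟨n, by omega⟩) x
  invFun f := if h : f.val = n then Sum.inr 0 else Sum.inl ⟨f.val, by omega⟩
  left_inv := by
    rintro (i | y)
    · have hi := i.isLt
      dsimp only [Sum.elim_inl]
      rw [dif_neg (show ¬ (i.val = n) by omega)]
    · dsimp only [Sum.elim_inr]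
      rw [dif_pos rfl]
      congr 1
      exact Subsingleton.elim _ _
  right_inv := by
    intro f
    beta_reduce
    by_cases h : f.val = n
    · rw [dif_pos h]
      dsimp only [Sum.elim_inr]
      exact Fin.ext (by simp [h])
    · rw [dif_neg h]
      rfl

/-- interior-first equivalence -/
def hE (n : ℕ) : (Fin n ⊕ Fin 1) ≃ Fin (n+1) where
  toFun x := Sum.elim (fun i : Fin n => (⟨i.val+1, by omega⟩ : Fin (n+1)))
    (fun _ => ⟨0, by omega⟩) x
  invFun f := if h : f.val = 0 then Sum.inr 0 else Sum.inl ⟨f.val - 1, by omega⟩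
  left_inv := by
    rintro (i | y)
    · dsimp only [Sum.elim_inl]
      rw [dif_neg (by simp)]
      exact congrArg Sum.inl (Fin.ext (by simp))
    · dsimp only [Sum.elim_inr]
      rw [dif_pos rfl]
      congr 1
      exact Subsingleton.elim _ _
  right_inv := by
    intro f
    beta_reduce
    by_cases h : f.val = 0
    · rw [dif_pos h]
      dsimp only [Sum.elim_inr]
      exact Fin.ext (by simp [h])
    · rw [dif_neg h]
      dsimp only [Sum.elim_inl]
      exact Fin.ext (by simp; omega)

lemma det_mix {n : ℕ} (N : Matrix (Fin (n+1)) (Fin (n+1)) ℚ)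
    (g h : (Fin n ⊕ Fin 1) ≃ Fin (n+1)) :
    (N.submatrix g h).det * (N.submatrix h g).det = N.det * N.det := by
  have e1 : N.submatrix g h = (N.submatrix g g).submatrix id (h.trans g.symm) := by
    ext i j; simp [Matrix.submatrix_apply]
  have e2 : N.submatrix h g = (N.submatrix h h).submatrix id (g.trans h.symm) := by
    ext i j; simp [Matrix.submatrix_apply]
  rw [e1, e2, Matrix.det_permute', Matrix.det_permute',
    Matrix.det_submatrix_equiv_self, Matrix.det_submatrix_equiv_self]
  have hsymm : (g.trans h.symm) = (h.trans g.symm).symm := by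
    ext x; simp
  rw [hsymm]
  have hs : Equiv.Perm.sign ((h.trans g.symm).symm) = Equiv.Perm.sign (h.trans g.symm) := by
    exact Equiv.Perm.sign_symm _
  rw [hs]
  have hz : ((Equiv.Perm.sign (h.trans g.symm) : ℤ))
      * ((Equiv.Perm.sign (h.trans g.symm) : ℤ)) = 1 := by
    have hz0 := congrArg (Units.val) (Int.units_mul_self (Equiv.Perm.sign (h.trans g.symm)))
    simpa [Units.val_mul] using hz0
  have h5 : ((Equiv.Perm.sign (h.trans g.symm) : ℤ) : ℚ)
      * ((Equiv.Perm.sign (h.trans g.symm) : ℤ) : ℚ) = 1 := by exact_mod_cast hz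
  linear_combination (N.det * N.det) * h5

theorem hankel_cond (k n : ℕ) (hA : Dk (k+2) n ≠ 0) :
    Dk k (n+2) * Dk (k+2) n
      = Dk k (n+1) * Dk (k+2) (n+1) - Dk (k+1) (n+1)^2 := by
  set M := hank k (n+2) with hMdef
  set A := hank (k+2) n with hAdef
  set B : Matrix (Fin n) (Fin 2) ℚ :=
    Matrix.of (fun i y => M (eqv n (Sum.inl i)) (eqv n (Sum.inr y))) with hBdef
  set C : Matrix (Fin 2) (Fin n) ℚ :=
    Matrix.of (fun y j => M (eqv n (Sum.inr y)) (eqv n (Sum.inl j))) with hCdef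
  set D : Matrix (Fin 2) (Fin 2) ℚ :=
    Matrix.of (fun y z => M (eqv n (Sum.inr y)) (eqv n (Sum.inr z))) with hDdef
  have hM : M.submatrix (eqv n) (eqv n) = Matrix.fromBlocks A B C D := by
    ext x y
    rcases x with i | u <;> rcases y with j | v
    · show M (eqv n (Sum.inl i)) (eqv n (Sum.inl j)) = A i j
      show cb (k + (i.val+1) + (j.val+1)) = cb (k+2+i.val+j.val)
      congr 1; omega
    · rfl
    · rfl
    · rfl
  have hAne : A.det ≠ 0 := hA
  haveI : Invertible A := A.invertibleOfIsUnitDet (isUnit_iff_ne_zero.2 hAne)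
  set S : Matrix (Fin 2) (Fin 2) ℚ := D - C * ⅟A * B with hSdef
  have h1 : Dk k (n+2) = A.det * S.det := by
    show M.det = _
    rw [← Matrix.det_submatrix_equiv_self (eqv n) M, hM, Matrix.det_fromBlocks₁₁]
  -- bordered matrices
  set N : Fin 2 → Fin 2 → Matrix (Fin n ⊕ Fin 1) (Fin n ⊕ Fin 1) ℚ :=
    fun y z => Matrix.fromBlocks A (Matrix.of fun i (_ : Fin 1) => B i z)
      (Matrix.of fun (_ : Fin 1) j => C y j) (Matrix.of fun _ _ => D y z) with hNdef
  have hN : ∀ y z, (N y z).det = A.det * S y z := by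
    intro y z
    rw [hNdef]
    rw [Matrix.det_fromBlocks₁₁]
    congr 1
    rw [Matrix.det_fin_one]
    simp [hSdef, Matrix.mul_apply, Matrix.sub_apply]
  have hN00 : N 0 0 = (hank k (n+1)).submatrix (hE n) (hE n) := by
    ext x y
    rcases x with i | u <;> rcases y with j | v
    all_goals (show cb _ = cb _; congr 1)
    all_goals try simp [eqv, gE, hE, hank]
    all_goals try omega
  have hN11 : N 1 1 = (hank (k+2) (n+1)).submatrix (gE n) (gE n) := by
    ext x y
    rcases x with i | u <;> rcases y with j | v
    all_goals (show cb _ = cb _; congr 1)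
    all_goals try simp [eqv, gE, hE, hank]
    all_goals try omega
  have hN01 : N 0 1 = (hank (k+1) (n+1)).submatrix (hE n) (gE n) := by
    ext x y
    rcases x with i | u <;> rcases y with j | v
    all_goals (show cb _ = cb _; congr 1)
    all_goals try simp [eqv, gE, hE, hank]
    all_goals try omega
  have hN10 : N 1 0 = (hank (k+1) (n+1)).submatrix (gE n) (hE n) := by
    ext x y
    rcases x with i | u <;> rcases y with j | v
    all_goals (show cb _ = cb _; congr 1)
    all_goals try simp [eqv, gE, hE, hank]
    all_goals try omega
  have e00 : A.det * S 0 0 = Dk k (n+1) := by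
    rw [← hN 0 0, hN00, Matrix.det_submatrix_equiv_self]
    rfl
  have e11 : A.det * S 1 1 = Dk (k+2) (n+1) := by
    rw [← hN 1 1, hN11, Matrix.det_submatrix_equiv_self]
    rfl
  have emix : (A.det * S 0 1) * (A.det * S 1 0)
      = Dk (k+1) (n+1) * Dk (k+1) (n+1) := by
    rw [← hN 0 1, ← hN 1 0, hN01, hN10, det_mix]
    rfl
  have hfin : Dk k (n+2) * Dk (k+2) n
      = (A.det * S 0 0) * (A.det * S 1 1) - (A.det * S 0 1) * (A.det * S 1 0) := by
    have hDk : Dk (k+2) n = A.det := rfl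
    rw [h1, hDk, Matrix.det_fin_two]
    ring
  rw [hfin, e00, e11, emix]
  ring


lemma Qp_pos (k n : ℕ) : 0 < Qp k n := by rw [part2]; exact Gp_pos _ _ _

lemma Qp_ne (k n : ℕ) : Qp k n ≠ 0 := (Qp_pos k n).ne'

lemma sgn2 (k c : ℕ) : (-1:ℚ)^(k*c) * (-1:ℚ)^((k+2)*c) = 1 := by
  rw [← pow_add, show k*c + (k+2)*c = 2*((k+1)*c) by ring, pow_mul]
  norm_num

lemma sgn3 (e : ℕ) : ((-1:ℚ)^e)^2 = 1 := by
  rw [← pow_mul, mul_comm, pow_mul]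
  norm_num

lemma main_det (n : ℕ) : ∀ k, Dk k n = (-1:ℚ)^(k * n.choose 2) * Qp k n := by
  induction n using Nat.strong_induction_on with
  | _ n ih =>
    match n, ih with
    | 0, _ =>
      intro k
      have h0 : Dk k 0 = 1 := Matrix.det_fin_zero
      have h1 : Qp k 0 = 1 := by
        rw [Qp]
        apply Finset.prod_eq_one
        intro j hj
        have hj1 := (Finset.mem_Icc.1 hj).1
        have : (j:ℚ) ≠ 0 := by
          have : (1:ℚ) ≤ (j:ℚ) := by exact_mod_cast hj1
          linarith
        rw [Nat.cast_zero, add_zero, div_self this, one_pow]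
      rw [h0, h1, show (0:ℕ).choose 2 = 0 from rfl, Nat.mul_zero, pow_zero, mul_one]
    | 1, _ =>
      intro k
      have h0 : Dk k 1 = cb k := Matrix.det_fin_one _
      have h1 : (1:ℕ).choose 2 = 0 := rfl
      rw [h0, h1, Nat.mul_zero, pow_zero, one_mul, part2]
      exact base1 k
    | (m+2), ih =>
      intro k
      have hA : Dk (k+2) m ≠ 0 := by
        rw [ih m (by omega) (k+2)]
        exact mul_ne_zero (pow_ne_zero _ (by norm_num)) (Qp_ne _ _)
      have hc := hankel_cond k m hA
      rw [ih m (by omega) (k+2), ih (m+1) (by omega) k, ih (m+1) (by omega) (k+2),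
        ih (m+1) (by omega) (k+1)] at hc
      have hne : ((-1:ℚ)^((k+2)*m.choose 2) * Qp (k+2) m) ≠ 0 :=
        mul_ne_zero (pow_ne_zero _ (by norm_num)) (Qp_ne _ _)
      have e1 := sgn2 k ((m+1).choose 2)
      have e2 := sgn3 ((k+1)*(m+1).choose 2)
      have hs1 := sgn_eq k m
      have key : ((-1:ℚ)^(k*(m+2).choose 2) * Qp k (m+2)) * ((-1:ℚ)^((k+2)*m.choose 2) * Qp (k+2) m)
          = ((-1:ℚ)^(k*(m+1).choose 2) * Qp k (m+1)) * ((-1:ℚ)^((k+2)*(m+1).choose 2) * Qp (k+2) (m+1))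
            - ((-1:ℚ)^((k+1)*(m+1).choose 2) * Qp (k+1) (m+1))^2 := by
        obtain ⟨a, rfl | rfl⟩ := Nat.even_or_odd' k
        · -- even case
          have hsE : (-1:ℚ)^(2*a) = 1 := Even.neg_one_pow ⟨a, by ring⟩
          have hs1' : (-1:ℚ)^(2*a*(m+2).choose 2) * (-1:ℚ)^((2*a+2)*m.choose 2) = 1 := by
            rw [hs1, hsE]
          rw [part2 (2*a) (m+2), part2 (2*a+2) m, part2 (2*a) (m+1), part2 (2*a+2) (m+1),
            part2 (2*a+1) (m+1), show 2*a/2 = a by omega, show (2*a+1)/2 = a by omega,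
            show (2*a+2)/2 = a+1 by omega, show (2*a+2+1)/2 = a+1 by omega]
          have hCE := Gp_CE a m
          linear_combination (Gp a a (m+2) * Gp (a+1) (a+1) m) * hs1'
            - (Gp a a (m+1) * Gp (a+1) (a+1) (m+1)) * e1
            + (Gp a (a+1) (m+1))^2 * e2 + hCE
        · -- odd case
          have hsO : (-1:ℚ)^(2*a+1) = -1 := Odd.neg_one_pow ⟨a, by ring⟩
          have hs1' : (-1:ℚ)^((2*a+1)*(m+2).choose 2) * (-1:ℚ)^((2*a+1+2)*m.choose 2) = -1 := by
            rw [hs1, hsO]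
          rw [part2 (2*a+1) (m+2), part2 (2*a+1+2) m, part2 (2*a+1) (m+1),
            part2 (2*a+1+2) (m+1), part2 (2*a+1+1) (m+1),
            show (2*a+1)/2 = a by omega, show (2*a+1+1)/2 = a+1 by omega,
            show (2*a+1+2)/2 = a+1 by omega, show (2*a+1+2+1)/2 = a+2 by omega]
          have hCO := Gp_CO a m
          linear_combination (Gp a (a+1) (m+2) * Gp (a+1) (a+2) m) * hs1'
            - (Gp a (a+1) (m+1) * Gp (a+1) (a+2) (m+1)) * e1
            + (Gp (a+1) (a+1) (m+1))^2 * e2 + hCO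
      exact mul_right_cancel₀ hne (hc.trans key.symm)



/-- Theorem 1: for `k ≥ 0` and `n ≥ 1`, the Hankel determinant
`D_k(n) = det(C(k+i+j, ⌊(k+i+j)/2⌋))_{i,j=0}^{n-1}` of the middle binomial
coefficients satisfies
`(-1)^(k·C(n,2)) · D_k(n) = ∏_{j=1}^k ((j+n)/j)^(min(j,k-j))
  = ∏_{i=1}^{⌊k/2⌋} ∏_{j=1}^{⌈k/2⌉} (i+j+n-1)/(i+j-1)`,
as an equality of rational numbers. -/
theorem stmt6 (k n : ℕ) (hn : 1 ≤ n) :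
    ((-1 : ℚ) ^ (k * n.choose 2) *
        Matrix.det (Matrix.of fun i j : Fin n =>
          (((k + i.val + j.val).choose ((k + i.val + j.val) / 2) : ℕ) : ℚ))
      = ∏ j ∈ Finset.Icc 1 k, (((j : ℚ) + n) / (j : ℚ)) ^ (min j (k - j)))
    ∧
    (∏ j ∈ Finset.Icc 1 k, (((j : ℚ) + n) / (j : ℚ)) ^ (min j (k - j))
      = ∏ i ∈ Finset.Icc 1 (k / 2), ∏ j ∈ Finset.Icc 1 ((k + 1) / 2),
          ((i : ℚ) + j + n - 1) / ((i : ℚ) + j - 1)) := by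
  constructor
  · have hD : Matrix.det (Matrix.of fun i j : Fin n =>
        (((k + i.val + j.val).choose ((k + i.val + j.val) / 2) : ℕ) : ℚ)) = Dk k n := rfl
    rw [hD, main_det n k, ← mul_assoc]
    have : (-1:ℚ)^(k * n.choose 2) * (-1:ℚ)^(k * n.choose 2) = 1 := by
      rw [← pow_add]
      exact Even.neg_one_pow ⟨k * n.choose 2, rfl⟩
    rw [this, one_mul]
    rfl
  · exact part2 k n
end

section
/- For every natural number k ≥ 0, the identity of rational functions r_k(x) = s_k(x) holds, where r_k(x) = ∏_{j=1}^{k} ((x+j)/j)^{min(j, k-j)} and s_k(x) = ∏_{i=1}^{⌊k/2⌋} ∏_{j=1}^{⌈k/2⌉} (x+i+j-1)/(i+j-1). -/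
/-- The rational function `r_k(x) = ∏_{j=1}^k ((x+j)/j)^(min(j,k-j))`. -/
noncomputable def r (k : ℕ) : RatFunc ℚ :=
  ∏ j ∈ Finset.Icc 1 k, ((RatFunc.X + (j : RatFunc ℚ)) / (j : RatFunc ℚ)) ^ (min j (k - j))

/-- The rational function `s_k(x) = ∏_{i=1}^{⌊k/2⌋} ∏_{j=1}^{⌈k/2⌉} (x+i+j-1)/(i+j-1)`. -/
noncomputable def s (k : ℕ) : RatFunc ℚ :=
  ∏ i ∈ Finset.Icc 1 (k / 2), ∏ j ∈ Finset.Icc 1 ((k + 1) / 2),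
    (RatFunc.X + (i : RatFunc ℚ) + (j : RatFunc ℚ) - 1) / ((i : RatFunc ℚ) + (j : RatFunc ℚ) - 1)

lemma card_fiber (a b m : ℕ) :
    ((Finset.Icc 1 a ×ˢ Finset.Icc 1 b).filter (fun p => p.1 + p.2 - 1 = m)).card
      = min (min m a) (min b (a + b - m)) := by
  have himg : ((Finset.Icc 1 a ×ˢ Finset.Icc 1 b).filter (fun p => p.1 + p.2 - 1 = m))
      = (Finset.Icc (max 1 (m + 1 - b)) (min a m)).image (fun i => (i, m + 1 - i)) := by
    ext ⟨i, j⟩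
    simp only [Finset.mem_filter, Finset.mem_product, Finset.mem_Icc, Finset.mem_image,
      Prod.mk.injEq]
    constructor
    · rintro ⟨⟨⟨hi1, hi2⟩, hj1, hj2⟩, hm⟩
      exact ⟨i, ⟨by omega, by omega⟩, rfl, by omega⟩
    · rintro ⟨x, ⟨hx1, hx2⟩, rfl, rfl⟩
      omega
  rw [himg, Finset.card_image_of_injOn (fun x _ y _ h => by
    simpa using congrArg Prod.fst h), Nat.card_Icc]
  omega

/-- For every `k ≥ 0`, the identity of rational functions `r_k(x) = s_k(x)` holds. -/
theorem stmt7 (k : ℕ) : r k = s k := by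
  have hs : s k = ∏ p ∈ Finset.Icc 1 (k / 2) ×ˢ Finset.Icc 1 ((k + 1) / 2),
      (RatFunc.X + ((p.1 + p.2 - 1 : ℕ) : RatFunc ℚ)) / ((p.1 + p.2 - 1 : ℕ) : RatFunc ℚ) := by
    rw [s, ← Finset.prod_product']
    refine Finset.prod_congr rfl ?_
    rintro ⟨i, j⟩ hp
    simp only [Finset.mem_product, Finset.mem_Icc] at hp
    have h1 : ((i + j - 1 : ℕ) : RatFunc ℚ) = (i : RatFunc ℚ) + j - 1 := by
      have : (1:ℕ) ≤ i + j := by omega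
      push_cast [Nat.cast_sub this]
      ring
    rw [h1]
    ring_nf
  rw [hs, ← Finset.prod_fiberwise_of_maps_to (g := fun p => p.1 + p.2 - 1)
    (t := Finset.Icc 1 k) (fun p hp => by
      simp only [Finset.mem_product, Finset.mem_Icc] at hp ⊢; omega)]
  rw [r]
  refine Finset.prod_congr rfl ?_
  intro m hm
  simp only [Finset.mem_Icc] at hm
  have hconst : (∏ p ∈ (Finset.Icc 1 (k / 2) ×ˢ Finset.Icc 1 ((k + 1) / 2)).filter
        (fun p => p.1 + p.2 - 1 = m),
      (RatFunc.X + ((p.1 + p.2 - 1 : ℕ) : RatFunc ℚ)) / ((p.1 + p.2 - 1 : ℕ) : RatFunc ℚ))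
      = ((RatFunc.X + (m : RatFunc ℚ)) / (m : RatFunc ℚ)) ^ (min m (k - m)) := by
    rw [Finset.prod_congr rfl (fun p hp => ?_), Finset.prod_const, card_fiber]
    · congr 1
      omega
    · simp only [Finset.mem_filter] at hp
      rw [hp.2]
  exact hconst.symm
end

section
/- For every natural number k ≥ 2, the identity of rational functions r_k(x)·r_{k-2}(x) = (-1)^k · r_{k-2}(x+1)·r_k(x-1) + r_{k-1}(x)² holds. -/
open Finset

/-- `rf k y = ∏_{j=1}^k ((y+j)/j)^(min(j,k-j))`, i.e. the rational function
`r_k` evaluated at an arbitrary rational-function argument `y` (so that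
`rf k (X+1)` is `r_k(x+1)`, etc.). -/
noncomputable def rf (k : ℕ) (y : RatFunc ℚ) : RatFunc ℚ :=
  ∏ j ∈ Finset.Icc 1 k, ((y + (j : RatFunc ℚ)) / (j : RatFunc ℚ)) ^ (min j (k - j))

namespace Stmt10Aux

abbrev K := RatFunc ℚ

lemma nat_ne_zero {j : ℕ} (h : j ≠ 0) : (j : K) ≠ 0 := by
  have h2 : (j : K) = algebraMap (Polynomial ℚ) K (j : Polynomial ℚ) := (map_natCast _ j).symm
  rw [h2]
  exact RatFunc.algebraMap_ne_zero (Nat.cast_ne_zero.mpr h)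

lemma X_add_nat_ne_zero (n : ℕ) : (RatFunc.X : K) + (n : K) ≠ 0 := by
  have h : (RatFunc.X : K) + (n : K)
      = algebraMap (Polynomial ℚ) K (Polynomial.X + (n : Polynomial ℚ)) := by
    rw [map_add, RatFunc.algebraMap_X, map_natCast]
  rw [h]
  apply RatFunc.algebraMap_ne_zero
  simpa using Polynomial.X_add_C_ne_zero (n : ℚ)

def eZ (m j : ℕ) : ℤ := max 0 (min (j : ℤ) ((m : ℤ) - (j : ℤ)))

lemma cast_min (m j : ℕ) : ((min j (m - j) : ℕ) : ℤ) = eZ m j := by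
  unfold eZ; omega

noncomputable def cc (m M : ℕ) : K := ∏ j ∈ Icc 1 M, (j : K) ^ (eZ m j)

lemma cc_ne_zero (m M : ℕ) : cc m M ≠ 0 := by
  unfold cc
  rw [Finset.prod_ne_zero_iff]
  intro j hj
  have : 1 ≤ j := (mem_Icc.mp hj).1
  exact zpow_ne_zero _ (nat_ne_zero (by omega))

lemma rf_mul_cc (m M : ℕ) (h : m ≤ M) (y : K) :
    rf m y * cc m M = ∏ j ∈ Icc 1 M, (y + (j : K)) ^ (eZ m j) := by
  unfold rf cc
  rw [Finset.prod_subset (Finset.Icc_subset_Icc le_rfl h) (fun j hj hj' => by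
    simp only [mem_Icc] at hj hj'
    have : min j (m - j) = 0 := by omega
    rw [this, pow_zero])]
  rw [← Finset.prod_mul_distrib]
  refine Finset.prod_congr rfl fun j hj => ?_
  have hj1 : 1 ≤ j := (mem_Icc.mp hj).1
  have hjne : (j : K) ≠ 0 := nat_ne_zero (by omega)
  rw [← zpow_natCast ((y + (j:K))/(j:K)), cast_min, ← mul_zpow, div_mul_cancel₀ _ hjne]

lemma prod_zpow_ite (s : Finset ℕ) (f : ℕ → K) (hf : ∀ j ∈ s, f j ≠ 0) (a : ℕ → ℤ)
    (t : ℕ) (ht : t ∈ s) (d : ℤ) :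
    ∏ j ∈ s, f j ^ (a j + if j = t then d else 0) = (∏ j ∈ s, f j ^ a j) * f t ^ d := by
  have h : ∀ j ∈ s, f j ^ (a j + if j = t then d else 0)
      = f j ^ a j * (if j = t then f j ^ d else 1) := by
    intro j hj
    rw [zpow_add₀ (hf j hj)]
    congr 1
    split <;> simp
  rw [Finset.prod_congr rfl h, Finset.prod_mul_distrib,
    Finset.prod_ite_eq' s t (fun j => f j ^ d), if_pos ht]

lemma combine (s : Finset ℕ) (f : ℕ → K) (hf : ∀ j ∈ s, f j ≠ 0) (a b c : ℕ → ℤ)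
    (t u : ℕ) (d e : ℤ) (ht : t ∈ s) (hu : u ∈ s)
    (hE : ∀ j ∈ s, a j + b j + (if j = t then d else 0)
        = (c j + c j) + (if j = u then e else 0)) :
    (∏ j ∈ s, f j ^ a j) * (∏ j ∈ s, f j ^ b j) * f t ^ d
      = (∏ j ∈ s, f j ^ c j) ^ 2 * f u ^ e := by
  have h1 : ∏ j ∈ s, f j ^ (a j + b j + if j = t then d else 0)
      = (∏ j ∈ s, f j ^ (a j + b j)) * f t ^ d :=
    prod_zpow_ite s f hf (fun j => a j + b j) t ht d
  have h2 : ∏ j ∈ s, f j ^ ((c j + c j) + if j = u then e else 0)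
      = (∏ j ∈ s, f j ^ (c j + c j)) * f u ^ e :=
    prod_zpow_ite s f hf (fun j => c j + c j) u hu e
  have hmid : ∏ j ∈ s, f j ^ (a j + b j + if j = t then d else 0)
      = ∏ j ∈ s, f j ^ ((c j + c j) + if j = u then e else 0) :=
    Finset.prod_congr rfl fun j hj => by rw [hE j hj]
  have hab : ∏ j ∈ s, f j ^ (a j + b j) = (∏ j ∈ s, f j ^ a j) * (∏ j ∈ s, f j ^ b j) := by
    rw [← Finset.prod_mul_distrib]
    exact Finset.prod_congr rfl fun j hj => zpow_add₀ (hf j hj) _ _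
  have hcc : ∏ j ∈ s, f j ^ (c j + c j) = (∏ j ∈ s, f j ^ c j) ^ 2 := by
    rw [sq, ← Finset.prod_mul_distrib]
    exact Finset.prod_congr rfl fun j hj => zpow_add₀ (hf j hj) _ _
  rw [hab] at h1
  rw [hcc] at h2
  rw [← h1, hmid, h2]

lemma shift_up (m M : ℕ) (h : m + 1 ≤ M) :
    (∏ j ∈ Icc 1 M, (RatFunc.X + 1 + (j : K)) ^ (eZ m j))
      = ∏ j ∈ Icc 1 M, (RatFunc.X + (j : K)) ^ (eZ m (j - 1)) := by
  have hstep : ∀ j ∈ Icc 1 M, (RatFunc.X + 1 + (j : K)) ^ (eZ m j)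
      = (fun (t : ℕ) => (RatFunc.X + (t : K)) ^ (eZ m (t - 1))) (j + 1) := by
    intro j hj
    simp only [Nat.add_sub_cancel]
    congr 1
    push_cast
    ring
  rw [Finset.prod_congr rfl hstep]
  have hmap : (Icc 1 M).map (addRightEmbedding 1) = Icc 2 (M + 1) := by
    rw [Finset.map_add_right_Icc]
  have h1 : (∏ j ∈ Icc 1 M, (fun (t : ℕ) => (RatFunc.X + (t : K)) ^ (eZ m (t - 1))) (j + 1))
      = ∏ t ∈ Icc 2 (M + 1), (RatFunc.X + (t : K)) ^ (eZ m (t - 1)) := by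
    rw [← hmap, Finset.prod_map]; rfl
  have h2 : (∏ t ∈ Icc 2 (M + 1), (RatFunc.X + (t : K)) ^ (eZ m (t - 1)))
      = ∏ t ∈ Icc 1 (M + 1), (RatFunc.X + (t : K)) ^ (eZ m (t - 1)) := by
    refine Finset.prod_subset (Finset.Icc_subset_Icc (by omega) le_rfl) ?_
    intro t ht ht'
    simp only [mem_Icc] at ht ht'
    have he1 : t = 1 := by omega
    subst he1
    have he2 : eZ m (1 - 1) = 0 := by unfold eZ; simp
    rw [he2, zpow_zero]
  have h3 : (∏ t ∈ Icc 1 M, (RatFunc.X + (t : K)) ^ (eZ m (t - 1)))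
      = ∏ t ∈ Icc 1 (M + 1), (RatFunc.X + (t : K)) ^ (eZ m (t - 1)) := by
    refine Finset.prod_subset (Finset.Icc_subset_Icc le_rfl (by omega)) ?_
    intro t ht ht'
    simp only [mem_Icc] at ht ht'
    have he1 : t = M + 1 := by omega
    subst he1
    have he2 : eZ m (M + 1 - 1) = 0 := by unfold eZ; omega
    rw [he2, zpow_zero]
  rw [h1, h2, ← h3]

lemma shift_down (m M : ℕ) (hm : 2 ≤ m) (h : m ≤ M) :
    (∏ j ∈ Icc 1 M, (RatFunc.X - 1 + (j : K)) ^ (eZ m j))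
      = RatFunc.X * ∏ j ∈ Icc 1 M, (RatFunc.X + (j : K)) ^ (eZ m (j + 1)) := by
  have hstep : ∀ j ∈ Icc 1 M, (RatFunc.X - 1 + (j : K)) ^ (eZ m j)
      = (fun (t : ℕ) => (RatFunc.X + (t : K)) ^ (eZ m (t + 1))) (j - 1) := by
    intro j hj
    have hj1 : 1 ≤ j := (mem_Icc.mp hj).1
    simp only []
    rw [show j - 1 + 1 = j by omega]
    congr 1
    push_cast [Nat.cast_sub hj1]
    ring
  rw [Finset.prod_congr rfl hstep]
  have hM1 : 1 ≤ M := by omega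
  have hmap : (Icc 0 (M - 1)).map (addRightEmbedding 1) = Icc 1 M := by
    rw [Finset.map_add_right_Icc]
    congr 1
    omega
  have h1 : (∏ j ∈ Icc 1 M, (fun (t : ℕ) => (RatFunc.X + (t : K)) ^ (eZ m (t + 1))) (j - 1))
      = ∏ t ∈ Icc 0 (M - 1), (RatFunc.X + (t : K)) ^ (eZ m (t + 1)) := by
    rw [← hmap, Finset.prod_map]
    refine Finset.prod_congr rfl fun t ht => ?_
    simp [addRightEmbedding]
  have hins : Icc 0 (M - 1) = insert 0 (Icc 1 (M - 1)) := by
    ext x; simp only [mem_Icc, mem_insert]; omega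
  have h0 : (RatFunc.X + ((0 : ℕ) : K)) ^ (eZ m (0 + 1)) = RatFunc.X := by
    have he : eZ m (0 + 1) = 1 := by unfold eZ; omega
    rw [he]
    simp
  have h3 : (∏ t ∈ Icc 1 (M - 1), (RatFunc.X + (t : K)) ^ (eZ m (t + 1)))
      = ∏ t ∈ Icc 1 M, (RatFunc.X + (t : K)) ^ (eZ m (t + 1)) := by
    refine Finset.prod_subset (Finset.Icc_subset_Icc le_rfl (by omega)) ?_
    intro t ht ht'
    simp only [mem_Icc] at ht ht'
    have he2 : eZ m (t + 1) = 0 := by unfold eZ; omega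
    rw [he2, zpow_zero]
  rw [h1, hins, Finset.prod_insert (by simp), h0, h3]


lemma hfX (k : ℕ) : ∀ j ∈ Icc 1 k, (RatFunc.X + (j : K)) ≠ 0 :=
  fun j _ => X_add_nat_ne_zero j

lemma hfc (k : ℕ) : ∀ j ∈ Icc 1 k, ((j : K)) ≠ 0 := by
  intro j hj
  simp only [mem_Icc] at hj
  exact nat_ne_zero (by omega)

lemma L1even (k : ℕ) (hk : 2 ≤ k) (he : k % 2 = 0) :
    rf k RatFunc.X * rf (k-2) RatFunc.X * ((k-1 : ℕ) : K)
      = rf (k-1) RatFunc.X ^ 2 * (RatFunc.X + ((k-1 : ℕ) : K)) := by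
  have h1 : 1 ∈ Icc 1 k := by simp only [mem_Icc]; omega
  have hk1 : k - 1 ∈ Icc 1 k := by simp only [mem_Icc]; omega
  have hE : ∀ j ∈ Icc 1 k, eZ k j + eZ (k-2) j + (if j = 1 then (0:ℤ) else 0)
      = (eZ (k-1) j + eZ (k-1) j) + (if j = k-1 then (1:ℤ) else 0) := by
    intro j hj; simp only [mem_Icc] at hj; unfold eZ; split_ifs <;> omega
  have hnum := combine (Icc 1 k) (fun j => RatFunc.X + (j:K)) (hfX k)
    (eZ k) (eZ (k-2)) (eZ (k-1)) 1 (k-1) 0 1 h1 hk1 hE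
  have hden := combine (Icc 1 k) (fun j => ((j : ℕ):K)) (hfc k)
    (eZ k) (eZ (k-2)) (eZ (k-1)) 1 (k-1) 0 1 h1 hk1 hE
  simp only [zpow_zero, mul_one, zpow_one] at hnum hden
  have e1 := rf_mul_cc k k le_rfl RatFunc.X
  have e2 := rf_mul_cc (k-2) k (by omega) RatFunc.X
  have e3 := rf_mul_cc (k-1) k (by omega) RatFunc.X
  rw [← e1, ← e2, ← e3] at hnum
  have hden' : cc k k * cc (k-2) k = cc (k-1) k ^ 2 * ((k-1:ℕ) : K) := by
    unfold cc; exact hden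
  apply mul_right_cancel₀ (pow_ne_zero 2 (cc_ne_zero (k-1) k))
  linear_combination hnum - (rf k RatFunc.X * rf (k-2) RatFunc.X) * hden'

lemma L2even (k : ℕ) (hk : 2 ≤ k) (he : k % 2 = 0) :
    rf (k-2) (RatFunc.X + 1) * rf k (RatFunc.X - 1) * ((k-1 : ℕ) : K)
      = rf (k-1) RatFunc.X ^ 2 * RatFunc.X := by
  have h1 : 1 ∈ Icc 1 k := by simp only [mem_Icc]; omega
  have hk1 : k - 1 ∈ Icc 1 k := by simp only [mem_Icc]; omega
  have hE : ∀ j ∈ Icc 1 k, eZ (k-2) (j-1) + eZ k (j+1) + (if j = 1 then (0:ℤ) else 0)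
      = (eZ (k-1) j + eZ (k-1) j) + (if j = 1 then (0:ℤ) else 0) := by
    intro j hj; simp only [mem_Icc] at hj; unfold eZ; split_ifs <;> omega
  have hEc : ∀ j ∈ Icc 1 k, eZ k j + eZ (k-2) j + (if j = 1 then (0:ℤ) else 0)
      = (eZ (k-1) j + eZ (k-1) j) + (if j = k-1 then (1:ℤ) else 0) := by
    intro j hj; simp only [mem_Icc] at hj; unfold eZ; split_ifs <;> omega
  have hnum := combine (Icc 1 k) (fun j => RatFunc.X + (j:K)) (hfX k)
    (fun j => eZ (k-2) (j-1)) (fun j => eZ k (j+1)) (eZ (k-1)) 1 1 0 0 h1 h1 hE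
  have hden := combine (Icc 1 k) (fun j => ((j : ℕ):K)) (hfc k)
    (eZ k) (eZ (k-2)) (eZ (k-1)) 1 (k-1) 0 1 h1 hk1 hEc
  simp only [zpow_zero, mul_one, zpow_one] at hnum hden
  have e2' := rf_mul_cc (k-2) k (by omega) (RatFunc.X + 1)
  rw [shift_up (k-2) k (by omega)] at e2'
  have e1' := rf_mul_cc k k le_rfl (RatFunc.X - 1)
  rw [shift_down k k hk le_rfl] at e1'
  have e3 := rf_mul_cc (k-1) k (by omega) RatFunc.X
  rw [← e2', ← e3] at hnum
  have hden' : cc k k * cc (k-2) k = cc (k-1) k ^ 2 * ((k-1:ℕ) : K) := by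
    unfold cc; exact hden
  apply mul_right_cancel₀ (pow_ne_zero 2 (cc_ne_zero (k-1) k))
  linear_combination RatFunc.X * hnum
    + (rf (k-2) (RatFunc.X + 1) * cc (k-2) k) * e1'
    - (rf (k-2) (RatFunc.X + 1) * rf k (RatFunc.X - 1)) * hden'

lemma L1odd (k m : ℕ) (hm : k = 2*m+1) (hm1 : 1 ≤ m) :
    rf k RatFunc.X * rf (k-2) RatFunc.X * ((k-1 : ℕ) : K) * (RatFunc.X + (m : K))
      = rf (k-1) RatFunc.X ^ 2 * (m : K) * (RatFunc.X + ((k-1 : ℕ) : K)) := by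
  have hk : 2 ≤ k := by omega
  have h1 : m ∈ Icc 1 k := by simp only [mem_Icc]; omega
  have hk1 : k - 1 ∈ Icc 1 k := by simp only [mem_Icc]; omega
  have hE : ∀ j ∈ Icc 1 k, eZ k j + eZ (k-2) j + (if j = m then (1:ℤ) else 0)
      = (eZ (k-1) j + eZ (k-1) j) + (if j = k-1 then (1:ℤ) else 0) := by
    intro j hj; simp only [mem_Icc] at hj; unfold eZ; split_ifs <;> omega
  have hnum := combine (Icc 1 k) (fun j => RatFunc.X + (j:K)) (hfX k)
    (eZ k) (eZ (k-2)) (eZ (k-1)) m (k-1) 1 1 h1 hk1 hE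
  have hden := combine (Icc 1 k) (fun j => ((j : ℕ):K)) (hfc k)
    (eZ k) (eZ (k-2)) (eZ (k-1)) m (k-1) 1 1 h1 hk1 hE
  simp only [zpow_one] at hnum hden
  have e1 := rf_mul_cc k k le_rfl RatFunc.X
  have e2 := rf_mul_cc (k-2) k (by omega) RatFunc.X
  have e3 := rf_mul_cc (k-1) k (by omega) RatFunc.X
  rw [← e1, ← e2, ← e3] at hnum
  have hden' : cc k k * cc (k-2) k * (m : K) = cc (k-1) k ^ 2 * ((k-1:ℕ) : K) := by
    unfold cc; exact hden
  apply mul_right_cancel₀ (pow_ne_zero 2 (cc_ne_zero (k-1) k))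
  linear_combination (m : K) * hnum
    - (rf k RatFunc.X * rf (k-2) RatFunc.X * (RatFunc.X + (m:K))) * hden'

lemma L2odd (k m : ℕ) (hm : k = 2*m+1) (hm1 : 1 ≤ m) :
    rf (k-2) (RatFunc.X + 1) * rf k (RatFunc.X - 1) * ((k-1 : ℕ) : K) * (RatFunc.X + (m : K))
      = rf (k-1) RatFunc.X ^ 2 * RatFunc.X * (m : K) := by
  have hk : 2 ≤ k := by omega
  have h1 : m ∈ Icc 1 k := by simp only [mem_Icc]; omega
  have hk1 : k - 1 ∈ Icc 1 k := by simp only [mem_Icc]; omega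
  have hE : ∀ j ∈ Icc 1 k, eZ (k-2) (j-1) + eZ k (j+1) + (if j = m then (1:ℤ) else 0)
      = (eZ (k-1) j + eZ (k-1) j) + (if j = k-1 then (0:ℤ) else 0) := by
    intro j hj; simp only [mem_Icc] at hj; unfold eZ; split_ifs <;> omega
  have hEc : ∀ j ∈ Icc 1 k, eZ k j + eZ (k-2) j + (if j = m then (1:ℤ) else 0)
      = (eZ (k-1) j + eZ (k-1) j) + (if j = k-1 then (1:ℤ) else 0) := by
    intro j hj; simp only [mem_Icc] at hj; unfold eZ; split_ifs <;> omega
  have hnum := combine (Icc 1 k) (fun j => RatFunc.X + (j:K)) (hfX k)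
    (fun j => eZ (k-2) (j-1)) (fun j => eZ k (j+1)) (eZ (k-1)) m (k-1) 1 0 h1 hk1 hE
  have hden := combine (Icc 1 k) (fun j => ((j : ℕ):K)) (hfc k)
    (eZ k) (eZ (k-2)) (eZ (k-1)) m (k-1) 1 1 h1 hk1 hEc
  simp only [zpow_zero, mul_one, zpow_one] at hnum hden
  have e2' := rf_mul_cc (k-2) k (by omega) (RatFunc.X + 1)
  rw [shift_up (k-2) k (by omega)] at e2'
  have e1' := rf_mul_cc k k le_rfl (RatFunc.X - 1)
  rw [shift_down k k hk le_rfl] at e1'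
  have e3 := rf_mul_cc (k-1) k (by omega) RatFunc.X
  rw [← e2', ← e3] at hnum
  have hden' : cc k k * cc (k-2) k * (m : K) = cc (k-1) k ^ 2 * ((k-1:ℕ) : K) := by
    unfold cc; exact hden
  apply mul_right_cancel₀ (mul_ne_zero (pow_ne_zero 2 (cc_ne_zero (k-1) k))
    (nat_ne_zero (show m ≠ 0 by omega)))
  linear_combination ((m:K))^2 * RatFunc.X * hnum
    + ((m:K))^2 * (rf (k-2) (RatFunc.X + 1) * cc (k-2) k * (RatFunc.X + (m:K))) * e1'
    - (rf (k-2) (RatFunc.X + 1) * rf k (RatFunc.X - 1) * (RatFunc.X + (m:K)) * (m:K)) * hden'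

end Stmt10Aux

open Stmt10Aux in
/-- For every `k ≥ 2`, the identity of rational functions
`r_k(x)·r_{k-2}(x) = (-1)^k·r_{k-2}(x+1)·r_k(x-1) + r_{k-1}(x)²` holds. -/
theorem stmt10 (k : ℕ) (hk : 2 ≤ k) :
    rf k RatFunc.X * rf (k - 2) RatFunc.X
      = (-1) ^ k * rf (k - 2) (RatFunc.X + 1) * rf k (RatFunc.X - 1)
        + (rf (k - 1) RatFunc.X) ^ 2 := by
  rcases Nat.even_or_odd k with he | ho
  · have h1 := L1even k hk (Nat.even_iff.mp he)
    have h2 := L2even k hk (Nat.even_iff.mp he)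
    rw [he.neg_one_pow, one_mul]
    apply mul_right_cancel₀ (nat_ne_zero (show k - 1 ≠ 0 by omega) :
      ((k-1 : ℕ) : K) ≠ 0)
    linear_combination h1 - h2
  · obtain ⟨m, hmm⟩ := ho
    have hm : k = 2*m+1 := by omega
    have hm1 : 1 ≤ m := by omega
    have h1 := L1odd k m hm hm1
    have h2 := L2odd k m hm hm1
    rw [(Nat.odd_iff.mpr (by omega) : Odd k).neg_one_pow]
    apply mul_right_cancel₀ (mul_ne_zero
      (nat_ne_zero (show k - 1 ≠ 0 by omega) : ((k-1 : ℕ) : K) ≠ 0)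
      (X_add_nat_ne_zero m))
    rw [show k - 1 = 2*m from by omega] at h1 h2 ⊢
    push_cast at h1 h2 ⊢
    linear_combination h1 + h2
end

section
/- For all natural numbers a, b ≥ 1, the formal power series Σ_{n≥b} v_{a,b}(n)·x^{n+a-b-1} (which is well defined since v_{a,b}(n) = 0 for all natural numbers n with 0 ≤ n ≤ b-1, and all occurring exponents n+a-b-1 are ≥ a-1 ≥ 0) equals the power series expansion at 0 of the rational function F_a^b(x). -/
/-- `v_{a,b}(n) = ∏_{j=1}^a ∏_{i=1}^b (n + j - i)` (as a rational number). -/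
def vval (a b n : ℕ) : ℚ :=
  ∏ j ∈ Finset.Icc 1 a, ∏ i ∈ Finset.Icc 1 b, ((n : ℚ) + (j : ℚ) - (i : ℚ))

/-- The power series expansion at `0` of the rational function `F_a^b(x)`, obtained by
applying the operator `X^(a-1) D^a` (first differentiate `a` times, then multiply by
`x^(a-1)`) `b` times to `1/(1-x)`. -/
noncomputable def Fab (a b : ℕ) : PowerSeries ℚ :=
  (fun f => PowerSeries.X ^ (a - 1) * (PowerSeries.derivativeFun^[a] f))^[b]
    ((1 - PowerSeries.X : PowerSeries ℚ)⁻¹)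

lemma asc_cast (n a : ℕ) :
    ((n.ascFactorial a : ℚ)) = ∏ j ∈ Finset.Icc 1 a, ((n : ℚ) + (j : ℚ) - 1) := by
  induction a with
  | zero => simp
  | succ a ih =>
    rw [Finset.prod_Icc_succ_top (by omega : 1 ≤ a + 1), Nat.ascFactorial_succ, Nat.cast_mul, ih]
    push_cast
    ring

lemma vval_zero (a n : ℕ) : vval a 0 n = 1 := by
  simp [vval]

lemma vval_succ (a b n : ℕ) :
    vval a (b + 1) n = vval a b n * ∏ j ∈ Finset.Icc 1 a, ((n : ℚ) + (j : ℚ) - (b + 1)) := by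
  unfold vval
  rw [← Finset.prod_mul_distrib]
  refine Finset.prod_congr rfl fun j _ => ?_
  rw [Finset.prod_Icc_succ_top (by omega : 1 ≤ b + 1)]
  push_cast
  ring

lemma derivIter (a : ℕ) (c : ℕ → ℚ) :
    PowerSeries.derivativeFun^[a] (PowerSeries.mk c)
      = PowerSeries.mk (fun m => ((m + 1).ascFactorial a : ℚ) * c (m + a)) := by
  induction a generalizing c with
  | zero => simp
  | succ a ih =>
    rw [Function.iterate_succ_apply]
    have h1 : PowerSeries.derivativeFun (PowerSeries.mk c)
        = PowerSeries.mk (fun m => c (m + 1) * ((m : ℚ) + 1)) := by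
      ext m
      show PowerSeries.coeff m (PowerSeries.derivative ℚ (PowerSeries.mk c)) = _
      rw [PowerSeries.coeff_derivativeFun, PowerSeries.coeff_mk, PowerSeries.coeff_mk]
    rw [h1, ih]
    ext m
    rw [PowerSeries.coeff_mk, PowerSeries.coeff_mk]
    have h2 : (m + 1).ascFactorial (a + 1) = (m + a + 1) * (m + 1).ascFactorial a := by
      rw [Nat.ascFactorial_succ]; ring
    rw [h2]
    push_cast
    ring

lemma step_mk (a : ℕ) (ha : 1 ≤ a) (c : ℕ → ℚ) :
    PowerSeries.X ^ (a - 1) * PowerSeries.derivativeFun^[a] (PowerSeries.mk c)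
      = PowerSeries.mk (fun m => if a ≤ m + 1 then
          ((m + 2 - a).ascFactorial a : ℚ) * c (m + 1) else 0) := by
  rw [derivIter]
  ext m
  rw [PowerSeries.coeff_X_pow_mul', PowerSeries.coeff_mk, PowerSeries.coeff_mk]
  by_cases h : a ≤ m + 1
  · rw [if_pos (by omega : a - 1 ≤ m), if_pos h,
      show m - (a - 1) + 1 = m + 2 - a from by omega,
      show m - (a - 1) + a = m + 1 from by omega]
  · rw [if_neg (by omega : ¬ a - 1 ≤ m), if_neg h]

lemma one_sub_X_inv : ((1 - PowerSeries.X : PowerSeries ℚ)⁻¹)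
    = PowerSeries.mk (fun _ => (1 : ℚ)) := by
  rw [PowerSeries.inv_eq_iff_mul_eq_one (by simp)]
  ext n
  rw [mul_sub, mul_one, map_sub]
  cases n with
  | zero => simp
  | succ n =>
    rw [PowerSeries.coeff_succ_mul_X, PowerSeries.coeff_mk, PowerSeries.coeff_mk,
      PowerSeries.coeff_one, if_neg (Nat.succ_ne_zero n)]
    ring

/-- For `a, b ≥ 1`, the formal power series `Σ_{n ≥ b} v_{a,b}(n)·x^(n+a-b-1)` (all occurring
exponents are `≥ a-1 ≥ 0`; the coefficient of `x^m` is `v_{a,b}(m+1+b-a)` for `m ≥ a-1` and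
`0` otherwise) equals the power series expansion at `0` of `F_a^b(x)`. -/
theorem stmt11 (a b : ℕ) (ha : 1 ≤ a) (hb : 1 ≤ b) :
    (PowerSeries.mk fun m => if a ≤ m + 1 then vval a b (m + 1 + b - a) else 0)
      = Fab a b := by
  induction b, hb using Nat.le_induction with
  | base =>
    rw [Fab, Function.iterate_one, one_sub_X_inv, step_mk a ha]
    ext m
    rw [PowerSeries.coeff_mk, PowerSeries.coeff_mk]
    by_cases h : a ≤ m + 1
    · rw [if_pos h, if_pos h, mul_one,
        show m + 1 + 1 - a = m + 2 - a from by omega, vval_succ, vval_zero, one_mul, asc_cast]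
      refine Finset.prod_congr rfl fun j _ => ?_
      ring_nf
    · rw [if_neg h, if_neg h]
  | succ b hb ih =>
    rw [Fab, Function.iterate_succ_apply', ← Fab, ← ih, step_mk a ha]
    ext m
    rw [PowerSeries.coeff_mk, PowerSeries.coeff_mk]
    by_cases h : a ≤ m + 1
    · rw [if_pos h, if_pos (by omega : a ≤ m + 1 + 1),
        show m + 1 + 1 + b - a = m + 2 + b - a from by omega,
        show m + 1 + (b + 1) - a = m + 2 + b - a from by omega,
        vval_succ, asc_cast, mul_comm (vval a b (m + 2 + b - a))]
      rw [if_pos h]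
      refine congrArg (· * vval a b (m + 2 + b - a)) (Finset.prod_congr rfl fun j _ => ?_)
      rw [Nat.cast_sub (show a ≤ m + 2 + b from by omega),
        Nat.cast_sub (show a ≤ m + 2 from by omega)]
      push_cast
      ring
    · rw [if_neg h, if_neg h]
end

section
/- For every natural number k ≥ 1, the formal power series Σ_{n≥0} r_{2k+1}(n)·x^{n+k-1} equals ∏_{j=0}^{k-1} (j!/(k+1+j)!) times the power series expansion at 0 of the rational function F_k^{k+1}(x). -/
/-- The value `r_k(n) = ∏_{j=1}^k ((n+j)/j)^(min(j,k-j))` of the polynomial `r_k`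
at the natural number `n`. -/
def rVal (k n : ℕ) : ℚ :=
  ∏ j ∈ Finset.Icc 1 k, (((n : ℚ) + (j : ℚ)) / (j : ℚ)) ^ (min j (k - j))

open Finset PowerSeries

/-- Generic grid-product counting lemma. -/
lemma prodGrid {M : Type*} [CommMonoid M] (f : ℕ → M) (b a : ℕ) :
    ∏ i ∈ Finset.range a, ∏ t ∈ Finset.range b, f (i + t)
      = ∏ s ∈ Finset.range (a + b - 1),
          f s ^ (min (min (s + 1) a) (min b (a + b - 1 - s))) := by
  rcases b with _ | b
  · simp
  · induction a with
    | zero => simp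
    | succ a ih =>
      have h1 : a + 1 + (b + 1) - 1 = a + (b + 1) := by omega
      have h2 : a + (b + 1) - 1 = a + b := by omega
      rw [h2] at ih
      have hsplitR : ∏ s ∈ Finset.range (a + 1 + (b + 1) - 1),
            f s ^ (min (min (s + 1) (a + 1)) (min (b + 1) (a + 1 + (b + 1) - 1 - s)))
          = (∏ s ∈ Finset.range a,
              f s ^ (min (min (s + 1) (a + 1)) (min (b + 1) (a + 1 + (b + 1) - 1 - s))))
            * ∏ t ∈ Finset.range (b + 1),
              f (a + t) ^ (min (min (a + t + 1) (a + 1))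
                  (min (b + 1) (a + 1 + (b + 1) - 1 - (a + t)))) := by
        rw [h1]
        exact Finset.prod_range_add _ a (b + 1)
      have hsplitL : ∏ s ∈ Finset.range (a + b),
            f s ^ (min (min (s + 1) a) (min (b + 1) (a + b - s)))
          = (∏ s ∈ Finset.range a,
              f s ^ (min (min (s + 1) a) (min (b + 1) (a + b - s))))
            * ∏ t ∈ Finset.range b,
              f (a + t) ^ (min (min (a + t + 1) a) (min (b + 1) (a + b - (a + t)))) :=
        Finset.prod_range_add _ a b
      rw [Finset.prod_range_succ, ih, hsplitR, hsplitL]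
      rw [mul_assoc]
      congr 1
      · apply Finset.prod_congr rfl
        intro s hs
        rw [Finset.mem_range] at hs
        congr 1
        omega
      · have hz : min (min (a + b + 1) a) (min (b + 1) (a + b - (a + b))) = 0 := by omega
        rw [show (∏ t ∈ Finset.range b,
              f (a + t) ^ (min (min (a + t + 1) a) (min (b + 1) (a + b - (a + t)))))
            = ∏ t ∈ Finset.range (b + 1),
              f (a + t) ^ (min (min (a + t + 1) a) (min (b + 1) (a + b - (a + t)))) by
          rw [Finset.prod_range_succ, hz, pow_zero, mul_one]]
        rw [← Finset.prod_mul_distrib]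
        apply Finset.prod_congr rfl
        intro t ht
        rw [Finset.mem_range] at ht
        rw [← pow_succ]
        congr 1
        omega

lemma descFac_eq (c k : ℕ) :
    (c + k).descFactorial k = ∏ t ∈ Finset.range k, (c + 1 + t) := by
  rw [Nat.descFactorial_eq_prod_range, ← Finset.prod_range_reflect]
  apply Finset.prod_congr rfl
  intro t ht
  rw [Finset.mem_range] at ht
  omega

lemma lemA (k n : ℕ) :
    ∏ i ∈ Finset.range (k + 1), (n + k + i).descFactorial k
      = ∏ s ∈ Finset.range (2 * k),
          (n + 1 + s) ^ (min (min (s + 1) (k + 1)) (min k (2 * k - s))) := by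
  have h1 : ∏ i ∈ Finset.range (k + 1), (n + k + i).descFactorial k
      = ∏ i ∈ Finset.range (k + 1), ∏ t ∈ Finset.range k, ((n + 1) + (i + t)) := by
    apply Finset.prod_congr rfl
    intro i _
    rw [show n + k + i = (n + i) + k by ring, descFac_eq]
    apply Finset.prod_congr rfl
    intro t _
    ring
  rw [h1, prodGrid (fun x => n + 1 + x) k (k + 1),
    show k + 1 + k - 1 = 2 * k by omega]

lemma lemB (k : ℕ) :
    ∏ j ∈ Finset.range k, (k + 1 + j).descFactorial (k + 1)
      = ∏ s ∈ Finset.range (2 * k),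
          (1 + s) ^ (min (min (s + 1) (k + 1)) (min k (2 * k - s))) := by
  have h1 : ∏ j ∈ Finset.range k, (k + 1 + j).descFactorial (k + 1)
      = ∏ j ∈ Finset.range k, ∏ t ∈ Finset.range (k + 1), (1 + (j + t)) := by
    apply Finset.prod_congr rfl
    intro j _
    rw [show k + 1 + j = j + (k + 1) by ring, descFac_eq]
    apply Finset.prod_congr rfl
    intro t _
    ring
  rw [h1, prodGrid (fun x => 1 + x) (k + 1) k,
    show k + (k + 1) - 1 = 2 * k by omega]
  apply Finset.prod_congr rfl
  intro s hs
  rw [Finset.mem_range] at hs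
  congr 1
  omega

lemma oneSubXinv : ((1 - X : ℚ⟦X⟧))⁻¹ = PowerSeries.mk (fun _ => 1) := by
  rw [PowerSeries.inv_eq_iff_mul_eq_one]
  · rw [mul_sub, mul_one]
    ext n
    rw [map_sub]
    cases n with
    | zero => simp
    | succ n => simp [mul_comm, PowerSeries.coeff_succ_X_mul, PowerSeries.coeff_one]
  · simp

lemma iterDeriv (a : ℕ) (c : ℕ → ℚ) :
    PowerSeries.derivativeFun^[a] (PowerSeries.mk c)
      = PowerSeries.mk (fun m => c (m + a) * ((m + a).descFactorial a : ℚ)) := by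
  induction a with
  | zero => simp
  | succ a ih =>
    rw [Function.iterate_succ_apply', ih]
    ext m
    rw [show ∀ f : ℚ⟦X⟧, f.derivativeFun = derivative ℚ f from fun _ => rfl,
      PowerSeries.coeff_derivative, PowerSeries.coeff_mk, PowerSeries.coeff_mk]
    have h : (m + (a + 1)).descFactorial (a + 1) = (m + 1) * (m + 1 + a).descFactorial a := by
      rw [show m + (a + 1) = (m + 1 + a) by ring, Nat.descFactorial_succ]
      congr 1
      omega
    rw [show m + 1 + a = m + (a + 1) by ring] at h ⊢
    rw [h]
    push_cast
    ring

lemma stepOp (a : ℕ) (ha : 1 ≤ a) (c : ℕ → ℚ) :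
    (X : ℚ⟦X⟧) ^ (a - 1) * PowerSeries.derivativeFun^[a] (PowerSeries.mk c)
      = PowerSeries.mk (fun m => c (m + 1) * (((m + 1).descFactorial a : ℕ) : ℚ)) := by
  rw [iterDeriv]
  ext m
  rw [PowerSeries.coeff_X_pow_mul', PowerSeries.coeff_mk, PowerSeries.coeff_mk]
  split_ifs with h
  · rw [show m - (a - 1) + a = m + 1 by omega]
  · rw [show (m + 1).descFactorial a = 0 from
      (Nat.descFactorial_eq_zero_iff_lt).2 (by omega)]
    simp

lemma fabEq (a b : ℕ) (ha : 1 ≤ a) :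
    Fab a b = PowerSeries.mk
      (fun m => ∏ i ∈ Finset.range b, (((m + 1 + i).descFactorial a : ℕ) : ℚ)) := by
  induction b with
  | zero =>
    rw [Fab, Function.iterate_zero_apply, oneSubXinv]
    simp
  | succ b ih =>
    rw [Fab, Function.iterate_succ_apply'] at *
    rw [ih, stepOp a ha]
    ext m
    rw [PowerSeries.coeff_mk, PowerSeries.coeff_mk]
    rw [Finset.prod_range_succ']
    congr 1
    apply Finset.prod_congr rfl
    intro i _
    congr 2
    omega

/-- For `k ≥ 1`, the formal power series `Σ_{n ≥ 0} r_{2k+1}(n)·x^(n+k-1)` equals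
`∏_{j=0}^{k-1}  (j!/(k+1+j)!)` times the power series expansion at `0` of `F_k^{k+1}(x)`. -/
theorem stmt13 (k : ℕ) (hk : 1 ≤ k) :
    (PowerSeries.mk fun m => if k - 1 ≤ m then rVal (2 * k + 1) (m - (k - 1)) else 0)
      = PowerSeries.C
          (∏ j ∈ Finset.range k, (j.factorial : ℚ) / ((k + 1 + j).factorial : ℚ))
        * Fab k (k + 1) := by
  rw [fabEq k (k + 1) hk]
  ext m
  rw [PowerSeries.coeff_C_mul, PowerSeries.coeff_mk, PowerSeries.coeff_mk]
  set Cst := ∏ j ∈ Finset.range k, (j.factorial : ℚ) / ((k + 1 + j).factorial : ℚ) with hCst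
  by_cases h : k - 1 ≤ m
  · rw [if_pos h]
    set n := m - (k - 1) with hn
    have hprod : ∏ i ∈ Finset.range (k + 1), (((m + 1 + i).descFactorial k : ℕ) : ℚ)
        = ∏ i ∈ Finset.range (k + 1), (((n + k + i).descFactorial k : ℕ) : ℚ) := by
      apply Finset.prod_congr rfl
      intro i _
      congr 2
      omega
    have hAq : ∏ i ∈ Finset.range (k + 1), (((n + k + i).descFactorial k : ℕ) : ℚ)
        = ∏ s ∈ Finset.range (2 * k),
            ((n : ℚ) + 1 + s) ^ (min (min (s + 1) (k + 1)) (min k (2 * k - s))) := by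
      exact_mod_cast congrArg (fun x : ℕ => (x : ℚ)) (lemA k n)
    have hBq : ∏ j ∈ Finset.range k, (((k + 1 + j).descFactorial (k + 1) : ℕ) : ℚ)
        = ∏ s ∈ Finset.range (2 * k),
            ((1 : ℚ) + s) ^ (min (min (s + 1) (k + 1)) (min k (2 * k - s))) := by
      exact_mod_cast congrArg (fun x : ℕ => (x : ℚ)) (lemB k)
    have hdf : ∀ j : ℕ, (((k + 1 + j).descFactorial (k + 1) : ℕ) : ℚ)
        = ((k + 1 + j).factorial : ℚ) / (j.factorial : ℚ) := by
      intro j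
      have h2 := Nat.factorial_mul_descFactorial (show k + 1 ≤ k + 1 + j by omega)
      rw [show k + 1 + j - (k + 1) = j by omega] at h2
      have h3 : (j.factorial : ℚ) * ((k + 1 + j).descFactorial (k + 1) : ℚ)
          = ((k + 1 + j).factorial : ℚ) := by exact_mod_cast h2
      field_simp [Nat.factorial_ne_zero] at h3 ⊢
      linarith [h3]
    have hden : (∏ s ∈ Finset.range (2 * k),
            ((1 : ℚ) + s) ^ (min (min (s + 1) (k + 1)) (min k (2 * k - s)))) * Cst = 1 := by
      rw [← hBq, hCst, ← Finset.prod_mul_distrib]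
      apply Finset.prod_eq_one
      intro j _
      rw [hdf j, div_mul_div_comm, mul_comm]
      apply div_self
      apply mul_ne_zero <;> exact_mod_cast Nat.factorial_ne_zero _
    have hDne : (∏ s ∈ Finset.range (2 * k),
            ((1 : ℚ) + s) ^ (min (min (s + 1) (k + 1)) (min k (2 * k - s)))) ≠ 0 :=
      left_ne_zero_of_mul_eq_one hden
    have hrval : rVal (2 * k + 1) n
        = (∏ s ∈ Finset.range (2 * k),
            ((n : ℚ) + 1 + s) ^ (min (min (s + 1) (k + 1)) (min k (2 * k - s))))
          / ∏ s ∈ Finset.range (2 * k),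
            ((1 : ℚ) + s) ^ (min (min (s + 1) (k + 1)) (min k (2 * k - s))) := by
      rw [rVal, Finset.prod_Icc_succ_top (by omega : 1 ≤ 2 * k + 1)]
      rw [show min (2 * k + 1) (2 * k + 1 - (2 * k + 1)) = 0 by omega, pow_zero, mul_one]
      rw [← Finset.Ico_add_one_right_eq_Icc, Finset.prod_Ico_eq_prod_range]
      rw [show 2 * k + 1 - 1 = 2 * k by omega]
      rw [← Finset.prod_div_distrib]
      apply Finset.prod_congr rfl
      intro s hs
      rw [Finset.mem_range] at hs
      rw [← div_pow]
      have he : min (1 + s) (2 * k + 1 - (1 + s))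
          = min (min (s + 1) (k + 1)) (min k (2 * k - s)) := by omega
      rw [he]
      congr 2 <;> push_cast <;> ring
    rw [hprod, hAq, hrval, div_eq_iff hDne]
    linear_combination -(∏ s ∈ Finset.range (2 * k),
        ((n : ℚ) + 1 + s) ^ (min (min (s + 1) (k + 1)) (min k (2 * k - s)))) * hden
  · rw [if_neg h]
    have h0 : (((m + 1 + 0).descFactorial k : ℕ) : ℚ) = 0 := by
      rw [Nat.descFactorial_eq_zero_iff_lt.2 (by omega)]
      simp
    rw [Finset.prod_eq_zero (Finset.mem_range.2 (by omega : 0 < k + 1)) h0, mul_zero]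
end

section
/- For every natural number k ≥ 0, the formal power series B_{2k+1}(x) := (1+x²)^{k²+k+1} · Σ_{n≥0} (-1)^{C(n,2)}·r_{2k+1}(n)·x^n is a polynomial of degree 2k²+1, and this polynomial satisfies x^{2k²+1}·B_{2k+1}(1/x) = (-1)^k·B_{2k+1}(x). -/
open Polynomial Finset

/-- sign `(-1)^(C(n,2))` equals `(-1)^(n/2)` -/
lemma neg_one_choose_two (n : ℕ) : ((-1 : ℚ)) ^ (n.choose 2) = (-1) ^ (n / 2) := by
  induction n using Nat.strong_induction_on with
  | _ n ih =>
    match n with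
    | 0 => norm_num
    | 1 => norm_num
    | (n+2) =>
      have h2 : (n+2).choose 2 = n.choose 2 + (2*n+1) := by
        have h3 : (n+2)*(n+2-1) = n*(n-1) + 2*(2*n+1) := by
          cases n with
          | zero => norm_num
          | succ p => simp only [show p+1+2-1 = p+2 from rfl, show p+1-1 = p from rfl]; ring
        rw [Nat.choose_two_right, Nat.choose_two_right, h3]; omega
      have ihn := ih n (by omega)
      have h4 : ((-1:ℚ)) ^ (2*n+1) = -1 := by
        rw [pow_succ, pow_mul]; norm_num
      have h5 : (n+2)/2 = n/2 + 1 := by omega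
      rw [h2, pow_add, ihn, h4, h5, pow_succ]

/-- Pascal-style summation identity. -/
lemma sum_pascal (m : ℕ) (f : ℕ → ℚ) :
    ∑ i ∈ range (m+2), (-1:ℚ)^i * ((m+1).choose i) * f i
      = ∑ i ∈ range (m+1), (-1:ℚ)^i * (m.choose i) * (f i - f (i+1)) := by
  have hpascal : ∀ i, (((m+1).choose i : ℚ)) =
      (m.choose i : ℚ) + (if i = 0 then 0 else (m.choose (i-1) : ℚ)) := by
    intro i
    match i with
    | 0 => simp
    | (i+1) => simp [Nat.choose_succ_succ, Nat.cast_add]; ring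
  calc ∑ i ∈ range (m+2), (-1:ℚ)^i * ((m+1).choose i) * f i
      = ∑ i ∈ range (m+2), ((-1:ℚ)^i * (m.choose i) * f i
          + (-1:ℚ)^i * (if i = 0 then 0 else (m.choose (i-1) : ℚ)) * f i) := by
        refine Finset.sum_congr rfl fun i _ => ?_
        rw [hpascal i]; ring
    _ = ∑ i ∈ range (m+2), (-1:ℚ)^i * (m.choose i) * f i
          + ∑ i ∈ range (m+2), (-1:ℚ)^i * (if i = 0 then 0 else (m.choose (i-1) : ℚ)) * f i := by
        rw [Finset.sum_add_distrib]
    _ = ∑ i ∈ range (m+1), (-1:ℚ)^i * (m.choose i) * f i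
          + ∑ i ∈ range (m+1), (-1:ℚ)^(i+1) * (m.choose i) * f (i+1) := by
        rw [Finset.sum_range_succ (fun i => (-1:ℚ)^i * (m.choose i) * f i) (m+1)]
        rw [Finset.sum_range_succ' (fun i => (-1:ℚ)^i * (if i = 0 then 0 else (m.choose (i-1) : ℚ)) * f i) (m+1)]
        simp [Nat.choose_succ_self]
    _ = _ := by
        rw [← Finset.sum_add_distrib]
        refine Finset.sum_congr rfl fun i _ => ?_
        ring

lemma altsum : ∀ (m : ℕ) (P : Polynomial ℚ), P.natDegree < m → ∀ x : ℚ,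
    ∑ i ∈ range (m+1), (-1:ℚ)^i * (m.choose i) * P.eval (x - 2*i) = 0 := by
  intro m
  induction m with
  | zero => intro P h; omega
  | succ m ih =>
    intro P h x
    set Q : Polynomial ℚ := P - P.comp (X - C 2) with hQdef
    have hQeval : ∀ y : ℚ, Q.eval y = P.eval y - P.eval (y - 2) := by
      intro y; simp [hQdef]
    have step : ∑ i ∈ range (m+2), (-1:ℚ)^i * ((m+1).choose i) * P.eval (x - 2*i)
        = ∑ i ∈ range (m+1), (-1:ℚ)^i * (m.choose i) * Q.eval (x - 2*i) := by
      rw [sum_pascal m (fun i => P.eval (x - 2*i))]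
      refine Finset.sum_congr rfl fun i _ => ?_
      rw [hQeval]
      have : x - 2*((i:ℚ)+1) = x - 2*i - 2 := by ring
      push_cast
      rw [this]
    rw [step]
    by_cases hQ : Q = 0
    · simp [hQ]
    · have hP0 : P ≠ 0 := by
        intro h0; apply hQ; simp [hQdef, h0]
      have hnd : P.natDegree ≠ 0 := by
        intro h0
        obtain ⟨a, ha⟩ := Polynomial.natDegree_eq_zero.mp h0
        apply hQ
        simp [hQdef, ← ha]
      have hX : (X - C (2:ℚ)) = X + C (-2) := by rw [map_neg, sub_eq_add_neg]
      have hnd1 : (X - C (2:ℚ)).natDegree = 1 := by rw [hX]; exact natDegree_X_add_C _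
      have hcompnd : (P.comp (X - C 2)).natDegree = P.natDegree := by
        rw [natDegree_comp, hnd1, mul_one]
      have hlc : (P.comp (X - C 2)).leadingCoeff = P.leadingCoeff := by
        rw [leadingCoeff_comp (by rw [hnd1]; norm_num)]
        have : (X - C (2:ℚ)).leadingCoeff = 1 := by rw [hX]; exact monic_X_add_C _
        rw [this, one_pow, mul_one]
      have hcomp0 : P.comp (X - C (2:ℚ)) ≠ 0 := by
        intro h0
        rw [h0, leadingCoeff_zero] at hlc
        exact hP0 (leadingCoeff_eq_zero.mp hlc.symm)
      have hdeg : P.degree = (P.comp (X - C 2)).degree := by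
        rw [degree_eq_natDegree hP0, degree_eq_natDegree hcomp0, hcompnd]
      have hQlt : Q.degree < P.degree := degree_sub_lt hdeg hP0 hlc.symm
      have : Q.natDegree < P.natDegree := natDegree_lt_natDegree hQ hQlt
      exact ih Q (by omega) x

noncomputable def Ppoly (k : ℕ) : Polynomial ℚ :=
  ∏ j ∈ Finset.Icc 1 (2*k+1),
    (Polynomial.C ((j:ℚ)⁻¹) * (Polynomial.X + Polynomial.C (j:ℚ)))^(min j (2*k+1-j))

lemma Ppoly_eval (k : ℕ) (x : ℚ) :
    (Ppoly k).eval x = ∏ j ∈ Icc 1 (2*k+1),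
      (((j:ℚ))⁻¹)^(min j (2*k+1-j)) * (x + (j:ℚ))^(min j (2*k+1-j)) := by
  simp [Ppoly, eval_prod, mul_pow]

lemma Ppoly_eval_nat (k n : ℕ) : (Ppoly k).eval ((n:ℚ)) = rVal (2*k+1) n := by
  rw [Ppoly_eval, rVal]
  refine Finset.prod_congr rfl fun j _ => ?_
  rw [div_eq_mul_inv, mul_comm ((n:ℚ) + j), mul_pow]

lemma sum_min (k : ℕ) : ∑ j ∈ Icc 1 (2*k+1), min j (2*k+1-j) = k^2 + k := by
  have h1 : ∑ j ∈ Icc 1 (2*k+1), min j (2*k+1-j)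
      = ∑ j ∈ Ioc 0 k, min j (2*k+1-j) + ∑ j ∈ Ioc k (2*k+1), min j (2*k+1-j) := by
    rw [Finset.sum_Ioc_consecutive _ (Nat.zero_le k) (by omega), ← Finset.Icc_add_one_left_eq_Ioc, zero_add]
  have h2 : ∑ j ∈ Ioc 0 k, min j (2*k+1-j) = ∑ j ∈ range (k+1), j := by
    rw [← Finset.Icc_add_one_left_eq_Ioc, ← Finset.Ico_add_one_right_eq_Icc, Finset.sum_Ico_eq_sum_range]
    rw [Finset.sum_range_succ' (fun j => j) k]
    simp only [Nat.add_sub_cancel_left, add_zero]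
    refine Finset.sum_congr rfl fun i hi => ?_
    have : i < k := Finset.mem_range.mp hi
    rw [Nat.min_eq_left (by omega)]
    omega
  have h3 : ∑ j ∈ Ioc k (2*k+1), min j (2*k+1-j) = ∑ j ∈ range (k+1), j := by
    rw [← Finset.Icc_add_one_left_eq_Ioc, ← Finset.Ico_add_one_right_eq_Icc, Finset.sum_Ico_eq_sum_range]
    have hn : 2*k+1+1 - (k+1) = k+1 := by omega
    rw [hn]
    rw [← Finset.sum_range_reflect (fun j => j) (k+1)]
    refine Finset.sum_congr rfl fun i hi => ?_
    have : i < k+1 := Finset.mem_range.mp hi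
    rw [Nat.min_eq_right (by omega)]
    omega
  have h4 := Finset.sum_range_id_mul_two (k+1)
  have h5 : (k+1) * ((k+1) - 1) = k^2 + k := by simp; ring
  omega

lemma natDegree_Ppoly (k : ℕ) : (Ppoly k).natDegree ≤ k^2 + k := by
  refine le_trans (Polynomial.natDegree_prod_le _ _) ?_
  rw [← sum_min k]
  refine Finset.sum_le_sum fun j hj => ?_
  refine le_trans (Polynomial.natDegree_pow_le) ?_
  have hd : (C ((j:ℚ))⁻¹ * (X + C (j:ℚ))).natDegree ≤ 1 :=
    le_trans Polynomial.natDegree_mul_le (by rw [Polynomial.natDegree_C, Polynomial.natDegree_X_add_C])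
  exact le_trans (Nat.mul_le_mul_left _ hd) (by rw [mul_one])

lemma Ppoly_root (k t : ℕ) (h1 : 1 ≤ t) (h2 : t ≤ 2*k) : (Ppoly k).eval (-(t:ℚ)) = 0 := by
  rw [Ppoly_eval]
  refine Finset.prod_eq_zero (Finset.mem_Icc.mpr ⟨h1, by omega⟩) ?_
  have : (-(t:ℚ) + (t:ℚ)) = 0 := by ring
  rw [this, zero_pow (by omega), mul_zero]

lemma Ppoly_eval_zero (k : ℕ) : (Ppoly k).eval 0 = 1 := by
  rw [Ppoly_eval]
  refine Finset.prod_eq_one fun j hj => ?_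
  have hj1 : 1 ≤ j := (Finset.mem_Icc.mp hj).1
  rw [zero_add, ← mul_pow, inv_mul_cancel₀ (by positivity), one_pow]

lemma prod_conv (k : ℕ) (f : ℕ → ℚ) (h0 : f 0 = 1) :
    ∏ j ∈ Icc 1 (2*k+1), f j = ∏ j ∈ range (2*k+2), f j := by
  rw [Finset.prod_range_succ' f (2*k+1), h0, mul_one, ← Finset.Ico_add_one_right_eq_Icc,
    Finset.prod_Ico_eq_prod_range]
  exact Finset.prod_congr (by rw [show 2*k+1+1-1 = 2*k+1 from rfl]) fun i _ => by rw [Nat.add_comm]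

lemma prod_reflect (k : ℕ) (x : ℚ) :
    ∏ j ∈ Icc 1 (2*k+1), (x + ((2*k+1-j : ℕ):ℚ))^(min j (2*k+1-j))
      = ∏ j ∈ Icc 1 (2*k+1), (x + (j:ℚ))^(min j (2*k+1-j)) := by
  rw [prod_conv k _ (by norm_num), prod_conv k (fun j => (x + (j:ℚ))^(min j (2*k+1-j))) (by norm_num)]
  rw [← Finset.prod_range_reflect (fun j => (x + (j:ℚ))^(min j (2*k+1-j))) (2*k+2)]
  refine Finset.prod_congr rfl fun j hj => ?_
  have hj' : j < 2*k+2 := Finset.mem_range.mp hj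
  have h1 : 2*k+2-1-j = 2*k+1-j := by omega
  have h2 : min (2*k+1-j) (2*k+1-(2*k+1-j)) = min j (2*k+1-j) := by omega
  rw [h1, h2]

lemma Ppoly_symm (k : ℕ) (x : ℚ) :
    (Ppoly k).eval (-(2*k+1 : ℚ) - x) = (Ppoly k).eval x := by
  rw [Ppoly_eval, Ppoly_eval]
  have step1 : ∀ j ∈ Icc 1 (2*k+1),
      (((j:ℚ))⁻¹)^(min j (2*k+1-j)) * ((-(2*k+1 : ℚ) - x) + (j:ℚ))^(min j (2*k+1-j))
        = ((-1:ℚ))^(min j (2*k+1-j)) *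
          ((((j:ℚ))⁻¹)^(min j (2*k+1-j)) * (x + ((2*k+1-j : ℕ):ℚ))^(min j (2*k+1-j))) := by
    intro j hj
    obtain ⟨hj1, hj2⟩ := Finset.mem_Icc.mp hj
    have hc : ((2*k+1-j : ℕ):ℚ) = (2*k+1 : ℚ) - (j:ℚ) := by
      push_cast [Nat.cast_sub hj2]; ring
    have harg : (-(2*k+1 : ℚ) - x) + (j:ℚ) = -(x + ((2*k+1-j : ℕ):ℚ)) := by
      rw [hc]; ring
    rw [harg, neg_pow]
    ring
  rw [Finset.prod_congr rfl step1, Finset.prod_mul_distrib, Finset.prod_mul_distrib]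
  have hsign : ∏ j ∈ Icc 1 (2*k+1), ((-1:ℚ))^(min j (2*k+1-j)) = 1 := by
    rw [Finset.prod_pow_eq_pow_sum, sum_min]
    have he : Even (k^2+k) := by
      have : k^2+k = k*(k+1) := by ring
      rw [this]; exact Nat.even_mul_succ_self k
    exact Even.neg_one_pow he
  rw [hsign, one_mul, prod_reflect, ← Finset.prod_mul_distrib]

noncomputable def Ufun (k n : ℕ) : ℚ :=
  ∑ i ∈ range (k^2+k+2),
    if 2*i ≤ n then (-1:ℚ)^i * (((k^2+k+1).choose i : ℕ) : ℚ) * (Ppoly k).eval ((n:ℚ) - 2*i)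
    else 0

lemma Ufun_eq_neg (k n : ℕ) : Ufun k n
    = - ∑ i ∈ range (k^2+k+2),
        (if 2*i ≤ n then 0 else (-1:ℚ)^i * (((k^2+k+1).choose i : ℕ) : ℚ) * (Ppoly k).eval ((n:ℚ) - 2*i)) := by
  have hfull := altsum (k^2+k+1) (Ppoly k)
    (lt_of_le_of_lt (natDegree_Ppoly k) (by omega)) (n : ℚ)
  have hsplit : Ufun k n + ∑ i ∈ range (k^2+k+2),
      (if 2*i ≤ n then 0 else (-1:ℚ)^i * (((k^2+k+1).choose i : ℕ) : ℚ) * (Ppoly k).eval ((n:ℚ) - 2*i))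
      = ∑ i ∈ range (k^2+k+2), (-1:ℚ)^i * (((k^2+k+1).choose i : ℕ) : ℚ) * (Ppoly k).eval ((n:ℚ) - 2*i) := by
    rw [Ufun, ← Finset.sum_add_distrib]
    refine Finset.sum_congr rfl fun i _ => ?_
    split_ifs <;> ring
  have : (k^2+k+1)+1 = k^2+k+2 := rfl
  rw [this] at hfull
  rw [hfull] at hsplit
  linarith

lemma Ufun_vanish (k n : ℕ) (h : 2*k^2+1 < n) : Ufun k n = 0 := by
  rw [Ufun_eq_neg]
  rw [Finset.sum_eq_zero, neg_zero]
  intro i hi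
  have hi' : i < k^2+k+2 := Finset.mem_range.mp hi
  by_cases hc : 2*i ≤ n
  · rw [if_pos hc]
  · rw [if_neg hc]
    have ht1 : 1 ≤ 2*i - n := by omega
    have ht2 : 2*i - n ≤ 2*k := by omega
    have harg : (n:ℚ) - 2*i = -(((2*i - n : ℕ)):ℚ) := by
      have := Nat.cast_sub (le_of_not_ge hc) (R := ℚ)
      push_cast [this]
      ring
    rw [harg, Ppoly_root k _ ht1 ht2, mul_zero]

lemma Ufun_symm (k n : ℕ) (h : n ≤ 2*k^2+1) : Ufun k n = Ufun k (2*k^2+1-n) := by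
  have hm : Odd (k^2+k+1) := by
    have he : Even (k^2+k) := by
      have h' : k^2+k = k*(k+1) := by ring
      rw [h']; exact Nat.even_mul_succ_self k
    exact he.add_one
  have h2 : ∑ i ∈ range (k^2+k+2),
      (if 2*(k^2+k+1-i) ≤ n then 0 else (-1:ℚ)^(k^2+k+1-i) *
        (((k^2+k+1).choose (k^2+k+1-i) : ℕ) : ℚ) * (Ppoly k).eval ((n:ℚ) - 2*((k^2+k+1-i : ℕ):ℚ)))
      = ∑ i ∈ range (k^2+k+2),
      (if 2*i ≤ n then 0 else (-1:ℚ)^i *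
        (((k^2+k+1).choose i : ℕ) : ℚ) * (Ppoly k).eval ((n:ℚ) - 2*i)) := by
    have hr := Finset.sum_range_reflect (fun i =>
      (if 2*i ≤ n then 0 else (-1:ℚ)^i *
        (((k^2+k+1).choose i : ℕ) : ℚ) * (Ppoly k).eval ((n:ℚ) - 2*i))) (k^2+k+2)
    simpa [show ∀ i : ℕ, k^2+k+2-1-i = k^2+k+1-i from fun i => by omega] using hr
  rw [Ufun_eq_neg, ← h2, ← Finset.sum_neg_distrib, Ufun]
  refine Finset.sum_congr rfl fun i hi => ?_
  have hi' : i < k^2+k+2 := Finset.mem_range.mp hi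
  have him : i ≤ k^2+k+1 := by omega
  by_cases hA : 2*i ≤ 2*k^2+1-n
  · have hcond : ¬ (2*(k^2+k+1-i) ≤ n) := by omega
    rw [if_neg hcond, if_pos hA, Nat.choose_symm him]
    have harg : (n:ℚ) - 2*(((k^2+k+1-i : ℕ)):ℚ) = -(2*(k:ℚ)+1) - ((((2*k^2+1-n : ℕ)):ℚ) - 2*(i:ℚ)) := by
      push_cast [Nat.cast_sub him, Nat.cast_sub h]
      ring
    have hps := Ppoly_symm k ((((2*k^2+1-n : ℕ)):ℚ) - 2*(i:ℚ))
    have hps' : (Ppoly k).eval ((n:ℚ) - 2*(((k^2+k+1-i : ℕ)):ℚ))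
        = (Ppoly k).eval ((((2*k^2+1-n : ℕ)):ℚ) - 2*(i:ℚ)) := by
      rw [harg, ← hps]
    rw [hps']
    set a : ℚ := (-1:ℚ)^(k^2+k+1-i) with ha
    set b : ℚ := (-1:ℚ)^i with hb
    have h1 : a * b = -1 := by
      rw [ha, hb, ← pow_add, show k^2+k+1-i+i = k^2+k+1 from by omega]
      exact Odd.neg_one_pow hm
    have hbb : b * b = 1 := by
      rw [hb, ← pow_add]
      exact Even.neg_one_pow ⟨i, rfl⟩
    have hab : a = -b := by
      calc a = a * (b*b) := by rw [hbb, mul_one]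
        _ = (a*b)*b := by ring
        _ = -b := by rw [h1]; ring
    rw [hab]; ring
  · rw [if_neg hA]
    by_cases hB : 2*(k^2+k+1-i) ≤ n
    · rw [if_pos hB, neg_zero]
    · rw [if_neg hB]
      have ht1 : 1 ≤ 2*(k^2+k+1-i) - n := by omega
      have ht2 : 2*(k^2+k+1-i) - n ≤ 2*k := by omega
      have harg : (n:ℚ) - 2*(((k^2+k+1-i : ℕ)):ℚ) = -(((2*(k^2+k+1-i) - n : ℕ)):ℚ) := by
        push_cast [Nat.cast_sub him, Nat.cast_sub (le_of_not_ge hB)]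
        ring
      rw [harg, Ppoly_root k _ ht1 ht2, mul_zero, neg_zero]

lemma Ufun_zero (k : ℕ) : Ufun k 0 = 1 := by
  rw [Ufun]
  rw [Finset.sum_eq_single 0]
  · norm_num [Ppoly_eval_zero]
  · intro i hi hne
    rw [if_neg (by omega)]
  · intro habs
    exact absurd (Finset.mem_range.mpr (by omega)) habs

lemma coeff_AF (k n : ℕ) :
    (PowerSeries.coeff n) ((1 + PowerSeries.X ^ 2) ^ (k ^ 2 + k + 1) *
        PowerSeries.mk (fun n => (-1 : ℚ) ^ n.choose 2 * rVal (2 * k + 1) n))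
      = (-1:ℚ)^(n/2) * Ufun k n := by
  have expand : ((1 : PowerSeries ℚ) + PowerSeries.X ^ 2) ^ (k^2+k+1)
      = ∑ i ∈ range (k^2+k+2),
          PowerSeries.C (((k^2+k+1).choose i : ℕ) : ℚ) * PowerSeries.X^(2*i) := by
    rw [add_comm, add_pow]
    refine Finset.sum_congr rfl fun i _ => ?_
    rw [one_pow, ← pow_mul, mul_one, mul_comm]
    norm_cast
  rw [expand, Finset.sum_mul, map_sum, Ufun, Finset.mul_sum]
  refine Finset.sum_congr rfl fun i hi => ?_
  rw [mul_assoc, PowerSeries.coeff_C_mul, PowerSeries.coeff_X_pow_mul']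
  by_cases hc : 2*i ≤ n
  · rw [if_pos hc, if_pos hc, PowerSeries.coeff_mk]
    rw [← Ppoly_eval_nat k (n-2*i)]
    have hcast : (((n-2*i:ℕ)):ℚ) = (n:ℚ) - 2*i := by push_cast [Nat.cast_sub hc]; ring
    rw [hcast, neg_one_choose_two]
    have hd : n/2 = (n-2*i)/2 + i := by omega
    have hbb : ((-1:ℚ))^i * (-1)^i = 1 := by
      rw [← pow_add]; exact Even.neg_one_pow ⟨i, rfl⟩
    have hsign : ((-1:ℚ))^((n-2*i)/2) = (-1)^(n/2) * (-1)^i := by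
      calc ((-1:ℚ))^((n-2*i)/2) = (-1)^((n-2*i)/2) * ((-1)^i * (-1)^i) := by rw [hbb, mul_one]
        _ = ((-1:ℚ))^((n-2*i)/2 + i) * (-1)^i := by rw [pow_add]; ring
        _ = (-1)^(n/2) * (-1)^i := by rw [← hd]
    rw [hsign]
    ring
  · rw [if_neg hc, if_neg hc, mul_zero, mul_zero]

noncomputable def Bpoly (k : ℕ) : Polynomial ℚ :=
  ∑ n ∈ range (2*k^2+2), Polynomial.monomial n ((-1:ℚ)^(n/2) * Ufun k n)

lemma coeff_Bpoly (k j : ℕ) :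
    (Bpoly k).coeff j = if j < 2*k^2+2 then (-1:ℚ)^(j/2) * Ufun k j else 0 := by
  rw [Bpoly, Polynomial.finset_sum_coeff]
  simp [Polynomial.coeff_monomial]

/-- For every `k ≥ 0`, the formal power series
`B_{2k+1}(x) = (1+x²)^(k²+k+1) · Σ_{n≥0} (-1)^(C(n,2))·r_{2k+1}(n)·x^n`
is a polynomial of degree `2k²+1`, and this polynomial satisfies
`x^(2k²+1)·B_{2k+1}(1/x) = (-1)^k·B_{2k+1}(x)` (the left-hand side being the
reversal of the coefficients of `B_{2k+1}`). -/
theorem stmt14 (k : ℕ) :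
    ∃ B : Polynomial ℚ,
      (B : PowerSeries ℚ)
          = (1 + PowerSeries.X ^ 2) ^ (k ^ 2 + k + 1) *
              PowerSeries.mk (fun n => (-1 : ℚ) ^ n.choose 2 * rVal (2 * k + 1) n)
        ∧ B.degree = (2 * k ^ 2 + 1 : ℕ)
        ∧ Polynomial.reflect (2 * k ^ 2 + 1) B = Polynomial.C ((-1 : ℚ) ^ k) * B := by
  refine ⟨Bpoly k, ?_, ?_, ?_⟩
  · ext n
    rw [Polynomial.coeff_coe, coeff_AF, coeff_Bpoly]
    by_cases hn : n < 2*k^2+2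
    · rw [if_pos hn]
    · rw [if_neg hn, Ufun_vanish k n (by omega), mul_zero]
  · have hle : (Bpoly k).degree ≤ (2*k^2+1 : ℕ) := by
      refine (Polynomial.degree_le_iff_coeff_zero _ _).mpr fun m hm => ?_
      have hm' : 2*k^2+1 < m := by exact_mod_cast hm
      rw [coeff_Bpoly, if_neg (by omega)]
    have hne : (Bpoly k).coeff (2*k^2+1) ≠ 0 := by
      rw [coeff_Bpoly, if_pos (by omega)]
      have hU : Ufun k (2*k^2+1) = 1 := by
        have h' := Ufun_symm k (2*k^2+1) (le_refl _)
        rw [Nat.sub_self] at h'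
        rw [h', Ufun_zero]
      rw [hU, mul_one]
      exact pow_ne_zero _ (by norm_num)
    exact Polynomial.degree_eq_of_le_of_coeff_ne_zero hle hne
  · ext j
    rw [Polynomial.coeff_reflect, Polynomial.coeff_C_mul]
    by_cases hj : j ≤ 2*k^2+1
    · rw [Polynomial.revAt_le (by omega), coeff_Bpoly, coeff_Bpoly,
        if_pos (by omega), if_pos (by omega)]
      rw [← Ufun_symm k j hj]
      have hs : ((-1:ℚ))^((2*k^2+1-j)/2) = (-1)^k * (-1)^(j/2) := by
        have he : (2*k^2+1-j)/2 + j/2 = k^2 := by omega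
        have h1 : ((-1:ℚ))^((2*k^2+1-j)/2) * (-1)^(j/2) = (-1)^(k^2) := by rw [← pow_add, he]
        have hk2 : ((-1:ℚ))^(k^2) = (-1)^k := by
          rcases Nat.even_or_odd k with he'|ho
          · rw [Even.neg_one_pow (by rw [sq]; exact he'.mul_right k), Even.neg_one_pow he']
          · rw [Odd.neg_one_pow (ho.pow), Odd.neg_one_pow ho]
        have hbb : ((-1:ℚ))^(j/2) * (-1)^(j/2) = 1 := by
          rw [← pow_add]; exact Even.neg_one_pow ⟨j/2, rfl⟩
        calc ((-1:ℚ))^((2*k^2+1-j)/2)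
            = (-1)^((2*k^2+1-j)/2) * ((-1)^(j/2) * (-1)^(j/2)) := by rw [hbb, mul_one]
          _ = ((-1)^((2*k^2+1-j)/2) * (-1)^(j/2)) * (-1)^(j/2) := by ring
          _ = ((-1:ℚ))^(k^2) * (-1)^(j/2) := by rw [h1]
          _ = (-1)^k * (-1)^(j/2) := by rw [hk2]
      rw [hs]; ring
    · rw [Polynomial.revAt_eq_self_of_lt (by omega), coeff_Bpoly, if_neg (by omega), mul_zero]
end

section
/- Fix a natural number k ≥ 0 and let A_{2k+1}(x) := (1-x)^{k²+k+1} · Σ_{n≥0} r_{2k+1}(n)·x^n, which is a polynomial of degree k²-k (degree 0 when k = 0). Define B⁰(x) := (1/2)·( A_{2k+1}(x)·(1+x)^{k²+k+1} + A_{2k+1}(-x)·(1-x)^{k²+k+1} ) and B¹(x) := (1/(2x))·( A_{2k+1}(x)·(1+x)^{k²+k+1} − A_{2k+1}(-x)·(1-x)^{k²+k+1} ). Then B⁰ and B¹ are polynomials of degree 2k², and B¹(x) = x^{2k²}·B⁰(1/x). -/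
open Polynomial Finset

noncomputable def P (k : ℕ) : ℚ[X] :=
  ∏ j ∈ Icc 1 (2*k+1), (C ((j:ℚ)⁻¹) * (X + C (j:ℚ)))^(min j (2*k+1-j))

lemma icc_eq_range (k : ℕ) : range (2*k+2) = insert 0 (Icc 1 (2*k+1)) := by
  ext a; simp only [mem_range, mem_insert, mem_Icc]; omega

lemma coeff_comp_neg_X (p : ℚ[X]) (n : ℕ) :
    (p.comp (-X)).coeff n = (-1)^n * p.coeff n := by
  induction p using Polynomial.induction_on' with
  | add p q hp hq => simp [add_comp, hp, hq, mul_add]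
  | monomial i a =>
      have h1 : ((-X : ℚ[X])) ^ i = C ((-1)^i) * X ^ i := by
        rw [neg_pow]; congr 1; simp [map_pow]
      rw [monomial_comp, h1, coeff_monomial]
      rcases eq_or_ne i n with rfl | h
      · simp only [mul_comm, mul_assoc, coeff_C_mul, coeff_mul_C, coeff_X_pow,
          if_pos rfl]
        simp
      · simp only [mul_comm, mul_assoc, coeff_C_mul, coeff_mul_C, coeff_X_pow,
          if_neg h, if_neg (Ne.symm h)]
        ring

lemma findiff : ∀ (M : ℕ) (p : ℚ[X]), (p = 0 ∨ p.natDegree < M) → ∀ x : ℚ,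
    ∑ i ∈ range (M+1), (-1:ℚ)^i * (M.choose i : ℚ) * p.eval (x - i) = 0 := by
  intro M
  induction M with
  | zero =>
      rintro p (rfl | h) x
      · simp
      · omega
  | succ M ih =>
      intro p hp x
      rcases eq_or_ne p 0 with rfl | hne
      · simp
      have hdeg : p.natDegree < M + 1 := hp.resolve_left hne
      set q : ℚ[X] := p.comp (X + C 1) - p with hqdef
      have hrec : (p.comp (X + C 1)).comp (X - C 1) = p := by
        rw [comp_assoc]
        simp
      have hne0 : p.comp (X + C 1) ≠ 0 := fun hc => hne (by rw [← hrec, hc, zero_comp])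
      have hq0 : q = 0 ∨ q.natDegree < M := by
        rcases Nat.eq_zero_or_pos p.natDegree with h0 | hpos
        · left
          rw [hqdef, Polynomial.eq_C_of_natDegree_eq_zero h0]
          simp
        · rcases eq_or_ne q 0 with hq | hq
          · exact Or.inl hq
          · right
            have hcomp : (p.comp (X + C 1)).natDegree = p.natDegree := by
              rw [natDegree_comp, natDegree_X_add_C]; ring
            have hdeq : (p.comp (X + C 1)).degree = p.degree := by
              rw [degree_eq_natDegree hne0, degree_eq_natDegree hne, hcomp]
            have hlc : (p.comp (X + C 1)).leadingCoeff = p.leadingCoeff := by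
              rw [leadingCoeff_comp (by rw [natDegree_X_add_C]; norm_num)]
              rw [(monic_X_add_C (1:ℚ)).leadingCoeff]
              ring
            have hdq : q.degree < p.degree := by
              have := Polynomial.degree_sub_lt hdeq hne0 hlc
              rwa [hdeq] at this
            have : q.natDegree < p.natDegree := natDegree_lt_natDegree hq hdq
            omega
      have hqe : ∀ y : ℚ, q.eval y = p.eval (y + 1) - p.eval y := by
        intro y; simp [hqdef, eval_comp]
      have key := ih q hq0 (x - 1)
      -- now telescope
      have split : ∀ i, (-1:ℚ)^i * ((M+1).choose i : ℚ) * p.eval (x - i)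
          = ((-1:ℚ)^i * (M.choose i : ℚ) * p.eval (x - i))
            + (if i = 0 then 0 else (-1:ℚ)^i * (M.choose (i-1) : ℚ) * p.eval (x - i)) := by
        intro i
        cases i with
        | zero => simp
        | succ i =>
            rw [if_neg (Nat.succ_ne_zero i), Nat.choose_succ_succ]
            push_cast
            simp only [Nat.succ_eq_add_one]
            ring
      rw [Finset.sum_congr rfl (fun i _ => split i), Finset.sum_add_distrib]
      have e1 : ∑ i ∈ range (M+1+1), (-1:ℚ)^i * (M.choose i : ℚ) * p.eval (x - i)
          = ∑ i ∈ range (M+1), (-1:ℚ)^i * (M.choose i : ℚ) * p.eval (x - i) := by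
        rw [Finset.sum_range_succ]
        simp [Nat.choose_eq_zero_of_lt (Nat.lt_succ_self M)]
      have e2 : ∑ i ∈ range (M+1+1),
            (if i = 0 then 0 else (-1:ℚ)^i * (M.choose (i-1) : ℚ) * p.eval (x - i))
          = ∑ i ∈ range (M+1), -((-1:ℚ)^i * (M.choose i : ℚ) * p.eval (x - (i+1))) := by
        rw [Finset.sum_range_succ']
        simp only [Nat.succ_ne_zero, if_false, if_pos rfl, add_zero, Nat.succ_sub_one,
          ite_false, reduceIte]
        refine Finset.sum_congr rfl fun i _ => ?_
        push_cast
        ring_nf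
      rw [e1, e2, ← Finset.sum_add_distrib]
      rw [← key]
      refine Finset.sum_congr rfl fun i _ => ?_
      rw [hqe (x - 1 - i)]
      ring_nf

lemma P_natDegree_le (k : ℕ) : (P k).natDegree ≤ k^2 + k := by
  rw [← sum_min k]
  refine le_trans (Polynomial.natDegree_prod_le _ _) (Finset.sum_le_sum fun j hj => ?_)
  rw [natDegree_pow]
  have h1 : (C ((j:ℚ)⁻¹) * (X + C (j:ℚ))).natDegree ≤ 1 :=
    le_trans natDegree_mul_le (by
      simp only [natDegree_C, zero_add]
      exact le_trans (natDegree_add_le _ _) (by simp))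
  calc (min j (2*k+1-j)) * (C ((j:ℚ)⁻¹) * (X + C (j:ℚ))).natDegree
      ≤ (min j (2*k+1-j)) * 1 := Nat.mul_le_mul_left _ h1
    _ = min j (2*k+1-j) := mul_one _

lemma P_eval (k : ℕ) (x : ℚ) :
    (P k).eval x = ∏ j ∈ Icc 1 (2*k+1), ((x + (j:ℚ)) / (j:ℚ)) ^ (min j (2*k+1-j)) := by
  rw [P, eval_prod]
  refine Finset.prod_congr rfl fun j hj => ?_
  simp [div_eq_inv_mul, mul_comm]

lemma P_eval_nat (k n : ℕ) : (P k).eval (n : ℚ) = rVal (2*k+1) n := by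
  rw [P_eval, rVal]

lemma P_eval_zero_neg (k i : ℕ) (h1 : 1 ≤ i) (h2 : i ≤ 2*k) :
    (P k).eval (-(i:ℚ)) = 0 := by
  rw [P_eval]
  refine Finset.prod_eq_zero (i := i) (by simp only [mem_Icc]; omega) ?_
  rw [neg_add_cancel, zero_div]
  exact zero_pow (by omega)

lemma P_eval_one_pos (k : ℕ) : 0 < (P k).eval 1 := by
  rw [P_eval]
  refine Finset.prod_pos fun j hj => ?_
  simp only [mem_Icc] at hj
  have : (0:ℚ) < j := by exact_mod_cast hj.1
  positivity

lemma P_symm (k : ℕ) (x : ℚ) : (P k).eval (-(2*k+1) - x) = (P k).eval x := by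
  rw [P_eval, P_eval]
  simp only [div_pow, Finset.prod_div_distrib]
  congr 1
  -- numerators
  have key : ∀ y : ℚ, ∏ j ∈ Icc 1 (2*k+1), (y + (j:ℚ)) ^ (min j (2*k+1-j))
      = ∏ j ∈ range (2*k+2), (y + (j:ℚ)) ^ (min j (2*k+1-j)) := by
    intro y
    rw [show range (2*k+2) = insert 0 (Icc 1 (2*k+1)) from by
      ext a; simp only [mem_range, mem_insert, mem_Icc]; omega,
      Finset.prod_insert (by simp)]
    simp
  rw [key, key]
  have e1 : ∀ j ∈ range (2*k+2),
      ((-(2*k+1) - x) + (j:ℚ)) ^ (min j (2*k+1-j))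
      = (-1)^(min j (2*k+1-j)) * ((x + ((2*k+1-j : ℕ):ℚ)) ^ (min j (2*k+1-j))) := by
    intro j hj
    simp only [mem_range] at hj
    have hcast : ((2*k+1-j : ℕ):ℚ) = (2*k+1:ℚ) - j := by
      rw [Nat.cast_sub (by omega : j ≤ 2*k+1)]; push_cast; ring
    have hb : (-(2*(k:ℚ)+1) - x + j) = (-1) * (x + ((2*k+1-j:ℕ):ℚ)) := by
      rw [hcast]; ring
    rw [hb, mul_pow]
  rw [Finset.prod_congr rfl e1, Finset.prod_mul_distrib]
  have hsign : ∏ j ∈ range (2*k+2), (-1:ℚ)^(min j (2*k+1-j)) = 1 := by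
    rw [Finset.prod_pow_eq_pow_sum]
    have hsum : ∑ j ∈ range (2*k+2), min j (2*k+1-j) = k^2+k := by
      rw [show range (2*k+2) = insert 0 (Icc 1 (2*k+1)) from by
        ext a; simp only [mem_range, mem_insert, mem_Icc]; omega,
        Finset.sum_insert (by simp)]
      simp [sum_min k]
    rw [hsum]
    exact Even.neg_one_pow (by
      have := Nat.even_mul_succ_self k
      rwa [show k*(k+1) = k^2+k by ring] at this)
  rw [hsign, one_mul]
  have e2 : ∀ j ∈ range (2*k+2), (x + ((2*k+1-j:ℕ):ℚ))^(min j (2*k+1-j))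
      = (fun t : ℕ => (x + (t:ℚ))^(min t (2*k+1-t))) (2*k+2-1-j) := by
    intro j hj
    simp only [mem_range] at hj
    have h1 : 2*k+2-1-j = 2*k+1-j := by omega
    rw [h1]
    have h2 : min (2*k+1-j) (2*k+1-(2*k+1-j)) = min j (2*k+1-j) := by omega
    simp only [h2]
  rw [Finset.prod_congr rfl e2]
  exact Finset.prod_range_reflect (fun t : ℕ => (x + (t:ℚ))^(min t (2*k+1-t))) (2*k+2)

lemma coeff_one_sub_X_pow (N i : ℕ) :
    ((1 - X : ℚ[X])^N).coeff i = (-1)^i * (N.choose i : ℚ) := by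
  have h1 : (1 - X : ℚ[X]) = (1 + X).comp (-X) := by
    simp [add_comp, sub_eq_add_neg]
  rw [h1, ← pow_comp, coeff_comp_neg_X, coeff_one_add_X_pow]

lemma ps_coeff_one_sub_X_pow (N i : ℕ) :
    (PowerSeries.coeff i) ((1 - PowerSeries.X)^N) = (-1)^i * (N.choose i : ℚ) := by
  have h1 : (1 - PowerSeries.X : PowerSeries ℚ) = ((1 - X : ℚ[X]) : PowerSeries ℚ) := by
    rw [Polynomial.coe_sub, Polynomial.coe_one, Polynomial.coe_X]
  rw [h1, ← Polynomial.coe_pow, Polynomial.coeff_coe, coeff_one_sub_X_pow]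

lemma negpow (m n : ℕ) (h : n ≤ m) : ((-1:ℚ))^(m-n) = (-1)^m * (-1)^n := by
  rw [← pow_add, show m + n = (m-n) + 2*n by omega, pow_add, pow_mul]
  simp

lemma Tsym (k a b : ℕ) (hab : a + b = k^2 - k) :
    ∑ i ∈ range (a+1), (-1:ℚ)^i * ((k^2+k+1).choose i : ℚ) * (P k).eval ((a:ℚ) - i)
  = ∑ i ∈ range (b+1), (-1:ℚ)^i * ((k^2+k+1).choose i : ℚ) * (P k).eval ((b:ℚ) - i) := by
  have hk : k ≤ k^2 := Nat.le_self_pow two_ne_zero k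
  set N := k^2+k+1 with hN
  set f : ℕ → ℚ := fun i => (-1:ℚ)^i * (N.choose i : ℚ) * (P k).eval ((a:ℚ) - i) with hf
  have habN : a + b + (2*k+1) = N := by omega
  -- step 1: the full alternating sum vanishes
  have h1 : ∑ i ∈ range (N+1), f i = 0 :=
    findiff N (P k) (Or.inr (by have := P_natDegree_le k; omega)) a
  -- step 2: split off the initial segment
  have h2 : ∑ i ∈ Ico 0 (a+1), f i + ∑ i ∈ Ico (a+1) (N+1), f i = ∑ i ∈ Ico 0 (N+1), f i :=
    Finset.sum_Ico_consecutive _ (by omega) (by omega)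
  have h3 : ∑ i ∈ range (a+1), f i = - ∑ i ∈ Ico (a+1) (N+1), f i := by
    rw [Finset.range_eq_Ico] at h1 ⊢
    linarith [h1, h2]
  -- step 3: split the tail
  have h4 : ∑ i ∈ Ico (a+1) (a+2*k+1), f i + ∑ i ∈ Ico (a+2*k+1) (N+1), f i
      = ∑ i ∈ Ico (a+1) (N+1), f i :=
    Finset.sum_Ico_consecutive _ (by omega) (by omega)
  have h5 : ∑ i ∈ Ico (a+1) (a+2*k+1), f i = 0 := by
    refine Finset.sum_eq_zero fun i hi => ?_
    simp only [mem_Ico] at hi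
    have harg : (a:ℚ) - i = -(((i - a : ℕ)):ℚ) := by
      rw [Nat.cast_sub (by omega : a ≤ i)]
      ring
    rw [hf]
    simp only [harg, P_eval_zero_neg k (i-a) (by omega) (by omega), mul_zero]
  -- step 4: reindex the far tail
  have h6 : ∑ i ∈ Ico (a+2*k+1) (N+1), f i
      = ∑ t ∈ range (b+1), f (a+2*k+1+t) := by
    rw [Finset.sum_Ico_eq_sum_range]
    have hr : N+1-(a+2*k+1) = b+1 := by omega
    rw [hr]
  have h7 : ∀ t ∈ range (b+1), f (a+2*k+1+t)
      = -((-1:ℚ)^(b-t) * (N.choose (b-t) : ℚ) * (P k).eval (t:ℚ)) := by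
    intro t ht
    simp only [mem_range] at ht
    have hch : N.choose (a+2*k+1+t) = N.choose (b-t) := by
      rw [← Nat.choose_symm (by omega : a+2*k+1+t ≤ N)]
      congr 1
      omega
    have harg : (a:ℚ) - ((a+2*k+1+t : ℕ):ℚ) = -(2*(k:ℚ)+1) - t := by
      push_cast
      ring
    have hsymm : (P k).eval ((a:ℚ) - ((a+2*k+1+t : ℕ):ℚ)) = (P k).eval (t:ℚ) := by
      rw [harg]
      exact P_symm k (t:ℚ)
    have hsgn : ((-1:ℚ))^(a+2*k+1+t) = -((-1:ℚ)^(b-t)) := by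
      rw [negpow b t (by omega)]
      have hpar : ((-1:ℚ))^a * (-1)^b = 1 := by
        rw [← pow_add]
        refine Even.neg_one_pow ?_
        rw [hab]
        have h9 : k^2 - k = k * (k-1) := by
          cases k with
          | zero => simp
          | succ n => simp [pow_two]; ring_nf; omega
        rw [h9]
        rcases Nat.even_or_odd k with he | ho
        · exact he.mul_right _
        · refine Even.mul_left ?_ _
          rcases ho with ⟨m, hm⟩
          exact ⟨m, by omega⟩
      have expand : ((-1:ℚ))^(a+2*k+1+t) = (-1)^a * (-1)^t * (-1) := by
        rw [show a+2*k+1+t = (a+t+1) + 2*k by omega, pow_add, pow_mul, pow_add, pow_add]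
        norm_num
      rw [expand]
      have hb2 : ((-1:ℚ))^b * (-1)^b = 1 := by
        rw [← pow_add]
        exact Even.neg_one_pow ⟨b, rfl⟩
      have hab2 : ((-1:ℚ))^a = (-1)^b := by
        have h10 : ((-1:ℚ))^a * ((-1)^b * (-1)^b) = (-1)^b := by
          rw [← mul_assoc, hpar, one_mul]
        rwa [hb2, mul_one] at h10
      rw [hab2]
      ring
    rw [hf]
    simp only [hch, hsymm, hsgn]
    ring
  rw [h3, ← h4, h5, zero_add, h6, Finset.sum_congr rfl h7, Finset.sum_neg_distrib, neg_neg]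
  rw [← Finset.sum_range_reflect
    (fun i => (-1:ℚ)^i * (N.choose i : ℚ) * (P k).eval ((b:ℚ) - i)) (b+1)]
  refine Finset.sum_congr rfl fun t ht => ?_
  simp only [mem_range] at ht
  rw [show b+1-1-t = b-t from by omega]
  rw [Nat.cast_sub (by omega : t ≤ b)]
  rw [show (b:ℚ) - ((b:ℚ) - (t:ℚ)) = (t:ℚ) from by ring]

/-- Fix `k ≥ 0` and let `A = A_{2k+1}` be the polynomial (of degree `k²-k`) with
`A(x) = (1-x)^(k²+k+1)·Σ_{n≥0} r_{2k+1}(n)·x^n`.  Define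
`B⁰(x) = ½(A(x)(1+x)^(k²+k+1) + A(-x)(1-x)^(k²+k+1))` and
`B¹(x) = (1/(2x))(A(x)(1+x)^(k²+k+1) - A(-x)(1-x)^(k²+k+1))`.
Then `B⁰` and `B¹` are polynomials of degree `2k²` and `B¹(x) = x^(2k²)·B⁰(1/x)`
(i.e. `B¹` is the reversal of the coefficients of `B⁰`). -/
theorem stmt15 (k : ℕ) (A : Polynomial ℚ)
    (hA : (A : PowerSeries ℚ)
      = (1 - PowerSeries.X) ^ (k ^ 2 + k + 1) *
          PowerSeries.mk (fun n => rVal (2 * k + 1) n))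
    (hAdeg : A.degree = (k ^ 2 - k : ℕ)) :
    ∃ B0 B1 : Polynomial ℚ,
      B0 = (1 / 2 : ℚ) •
          (A * (1 + Polynomial.X) ^ (k ^ 2 + k + 1)
            + A.comp (-Polynomial.X) * (1 - Polynomial.X) ^ (k ^ 2 + k + 1))
        ∧ Polynomial.X * B1 = (1 / 2 : ℚ) •
          (A * (1 + Polynomial.X) ^ (k ^ 2 + k + 1)
            - A.comp (-Polynomial.X) * (1 - Polynomial.X) ^ (k ^ 2 + k + 1))
        ∧ B0.degree = (2 * k ^ 2 : ℕ)
        ∧ B1.degree = (2 * k ^ 2 : ℕ)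
        ∧ B1 = Polynomial.reflect (2 * k ^ 2) B0 := by
  have hk : k ≤ k^2 := Nat.le_self_pow two_ne_zero k
  set N := k^2+k+1 with hN
  have hcoeff : ∀ n : ℕ, A.coeff n = ∑ i ∈ range (n+1),
      (-1:ℚ)^i * (N.choose i : ℚ) * (P k).eval ((n:ℚ) - (i:ℚ)) := by
    intro n
    have h := congrArg (PowerSeries.coeff n) hA
    rw [Polynomial.coeff_coe, PowerSeries.coeff_mul] at h
    rw [Finset.Nat.sum_antidiagonal_eq_sum_range_succ_mk] at h
    rw [h]
    refine Finset.sum_congr rfl fun i hi => ?_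
    simp only [mem_range] at hi
    rw [ps_coeff_one_sub_X_pow, PowerSeries.coeff_mk, ← P_eval_nat k (n - i),
      Nat.cast_sub (by omega : i ≤ n)]
  have hsym : ∀ a b : ℕ, a + b = k^2 - k → A.coeff a = A.coeff b := by
    intro a b hab
    rw [hcoeff, hcoeff]
    exact Tsym k a b hab
  have hAne : A ≠ 0 := fun h => by simp [h] at hAdeg
  have hAnd : A.natDegree = k^2 - k := natDegree_eq_of_degree_eq_some hAdeg
  set CC := A * (1 + X : ℚ[X])^N with hCC
  have hXne : (1 + X : ℚ[X]) ≠ 0 := by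
    have := Polynomial.X_add_C_ne_zero (1:ℚ)
    rwa [map_one, add_comm] at this
  have hCne : CC ≠ 0 := mul_ne_zero hAne (pow_ne_zero _ hXne)
  have h1Xnd : ((1 + X : ℚ[X])^N).natDegree = N := by
    rw [natDegree_pow]
    rw [show (1 + X : ℚ[X]) = X + C 1 from by rw [add_comm]; simp, natDegree_X_add_C]
    ring
  have hCnd : CC.natDegree = 2*k^2+1 := by
    rw [hCC, natDegree_mul hAne (pow_ne_zero _ hXne), hAnd, h1Xnd]
    omega
  -- palindromy of A
  have hArefl : reflect (k^2-k) A = A := by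
    ext n
    rw [coeff_reflect]
    by_cases hn : n ≤ k^2-k
    · rw [revAt_le hn]
      exact hsym _ _ (by omega)
    · rw [revAt_eq_self_of_lt (by omega)]
  have h1Xrefl : reflect N ((1 + X : ℚ[X])^N) = (1 + X)^N := by
    ext i
    rw [coeff_reflect]
    by_cases hi : i ≤ N
    · rw [revAt_le hi, coeff_one_add_X_pow, coeff_one_add_X_pow, Nat.choose_symm hi]
    · rw [revAt_eq_self_of_lt (by omega)]
  have hCrefl : reflect (2*k^2+1) CC = CC := by
    have := Polynomial.reflect_mul A ((1 + X : ℚ[X])^N)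
      (le_of_eq hAnd) (le_of_eq h1Xnd)
    rw [show (k^2-k) + N = 2*k^2+1 from by omega] at this
    rw [hCC, this, hArefl, h1Xrefl]
  have hCsym : ∀ a b : ℕ, a + b = 2*k^2+1 → CC.coeff a = CC.coeff b := by
    intro a b hab
    conv_lhs => rw [← hCrefl]
    rw [coeff_reflect, revAt_le (by omega : a ≤ 2*k^2+1),
      show 2*k^2+1-a = b from by omega]
  have hChigh : ∀ n : ℕ, 2*k^2+1 < n → CC.coeff n = 0 := fun n hn =>
    coeff_eq_zero_of_natDegree_lt (by rw [hCnd]; omega)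
  have hCtop : CC.coeff (2*k^2+1) ≠ 0 := by
    have := Polynomial.leadingCoeff_ne_zero.mpr hCne
    rwa [leadingCoeff, hCnd] at this
  have hC1 : CC.coeff 1 = (P k).eval 1 := by
    rw [hCC, coeff_mul, Finset.Nat.sum_antidiagonal_eq_sum_range_succ_mk]
    rw [Finset.sum_range_succ, Finset.sum_range_succ, Finset.sum_range_zero]
    rw [coeff_one_add_X_pow, coeff_one_add_X_pow]
    rw [hcoeff 0, hcoeff 1]
    rw [Finset.sum_range_succ, Finset.sum_range_succ, Finset.sum_range_succ,
      Finset.sum_range_zero]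
    norm_num [Nat.choose_one_right, Nat.choose_zero_right]
    ring
  have hC1ne : CC.coeff 1 ≠ 0 := by
    rw [hC1]; exact ne_of_gt (P_eval_one_pos k)
  -- the composed polynomial
  have hD : A.comp (-X) * (1 - X : ℚ[X])^N = CC.comp (-X) := by
    rw [hCC, mul_comp, pow_comp, add_comp, one_comp, X_comp]
    rw [sub_eq_add_neg]
  set B0 : ℚ[X] := (1/2 : ℚ) • (CC + CC.comp (-X)) with hB0
  set B1' : ℚ[X] := (1/2 : ℚ) • (CC - CC.comp (-X)) with hB1'
  have hB1'0 : B1'.coeff 0 = 0 := by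
    rw [hB1', coeff_smul, coeff_sub, coeff_comp_neg_X]
    simp
  set B1 : ℚ[X] := B1'.divX with hB1
  have hXB1 : X * B1 = B1' := by
    have := divX_mul_X_add B1'
    rw [hB1'0, map_zero, add_zero] at this
    rw [hB1, mul_comm]
    exact this
  have cB0 : ∀ n : ℕ, B0.coeff n = ((1 + (-1:ℚ)^n)/2) * CC.coeff n := by
    intro n
    rw [hB0, coeff_smul, coeff_add, coeff_comp_neg_X]
    simp only [smul_eq_mul]
    ring
  have cB1 : ∀ n : ℕ, B1.coeff n = ((1 - (-1:ℚ)^(n+1))/2) * CC.coeff (n+1) := by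
    intro n
    rw [hB1, coeff_divX, hB1', coeff_smul, coeff_sub, coeff_comp_neg_X]
    simp only [smul_eq_mul]
    ring
  -- degree computations
  have hB0high : ∀ n : ℕ, 2*k^2 < n → B0.coeff n = 0 := by
    intro n hn
    rw [cB0]
    rcases eq_or_ne n (2*k^2+1) with rfl | hne
    · have : ((-1:ℚ))^(2*k^2+1) = -1 := by
        rw [pow_succ, pow_mul]
        norm_num
      rw [this]
      norm_num
    · rw [hChigh n (by omega)]
      ring
  have hB1high : ∀ n : ℕ, 2*k^2 < n → B1.coeff n = 0 := by
    intro n hn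
    rw [cB1, hChigh (n+1) (by omega)]
    ring
  have hev : ((-1:ℚ))^(2*k^2) = 1 := by
    rw [pow_mul]
    norm_num
  have hB0top : B0.coeff (2*k^2) ≠ 0 := by
    rw [cB0, hev, hCsym (2*k^2) 1 (by omega)]
    simpa using hC1ne
  have hB1top : B1.coeff (2*k^2) ≠ 0 := by
    rw [cB1]
    have : ((-1:ℚ))^(2*k^2+1) = -1 := by
      rw [pow_succ, hev]; norm_num
    rw [this]
    simpa using hCtop
  have hB0deg : B0.degree = (2*k^2 : ℕ) := by
    refine le_antisymm ?_ (le_degree_of_ne_zero hB0top)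
    refine (degree_le_iff_coeff_zero _ _).2 fun m hm => hB0high m ?_
    exact_mod_cast hm
  have hB1deg : B1.degree = (2*k^2 : ℕ) := by
    refine le_antisymm ?_ (le_degree_of_ne_zero hB1top)
    refine (degree_le_iff_coeff_zero _ _).2 fun m hm => hB1high m ?_
    exact_mod_cast hm
  -- reflection
  have hrefl : B1 = reflect (2*k^2) B0 := by
    ext n
    rw [coeff_reflect]
    by_cases hn : n ≤ 2*k^2
    · rw [revAt_le hn, cB1, cB0, hCsym (2*k^2-n) (n+1) (by omega)]
      have h1 : ((-1:ℚ))^(2*k^2-n) = (-1)^n := by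
        rw [negpow _ _ hn, hev, one_mul]
      have h2 : ((-1:ℚ))^(n+1) = -(-1)^n := by
        rw [pow_succ]; ring
      rw [h1, h2]
      ring
    · rw [revAt_eq_self_of_lt (by omega), hB1high n (by omega), hB0high n (by omega)]
  refine ⟨B0, B1, ?_, ?_, ?_, ?_, ?_⟩
  · rw [hB0, hD, hCC]
  · rw [hXB1, hB1', hD, hCC]
  · exact hB0deg
  · exact hB1deg
  · exact hrefl
end
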